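/- arXiv:2106.11206 — 3 statements merged into one kernel-verified Lean document; each statement's English description precedes it below -/
import Mathlib

section
/- For every η ∈ Ω, the set of vectors {v̄ : v ∈ T_η} ⊆ ℂ^{Λ_{2,n}} is linearly independent over ℂ; since it has cardinality λ_{2,n}, it is a basis of ℂ^{λ_{2,n}}. -/
open Finset

/-- `Λ_{2,n}`: pairs `α ∈ ℕ²` with `1 ≤ α₁ + α₂ ≤ n`. -/
def Lam2 (n : ℕ) : Finset (ℕ × ℕ) :=
  ((range (n+1)) ×ˢ (range (n+1))).filter (fun α => 1 ≤ α.1 + α.2 ∧ α.1 + α.2 ≤ n)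

/-- `v̄ ∈ ℂ^{Λ_{2,n}}`, with `α`-coordinate `C(v₁,α₁)·C(v₂,α₂)`. -/
noncomputable def vbar (n : ℕ) (v : ℕ × ℕ) : (Lam2 n) → ℂ :=
  fun α => ((v.1.choose α.1.1 * v.2.choose α.1.2 : ℕ) : ℂ)

/-- `Λ_{3,n}`: triples `β ∈ ℕ³` with `1 ≤ β₁ + β₂ + β₃ ≤ n`. -/
def Lam3 (n : ℕ) : Finset (ℕ × ℕ × ℕ) :=
  ((range (n+1)) ×ˢ (range (n+1)) ×ˢ (range (n+1))).filter
    (fun β => 1 ≤ β.1 + β.2.1 + β.2.2 ∧ β.1 + β.2.1 + β.2.2 ≤ n)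

/-- The linear map `A_n : ℕ³ → ℕ²` with matrix rows `(1,1,n)` and `(0,1,n+1)`. -/
def Amap (n : ℕ) (β : ℕ × ℕ × ℕ) : ℕ × ℕ :=
  (β.1 + β.2.1 + n * β.2.2, β.2.1 + (n+1) * β.2.2)

/-- `c_β = Σ_{γ ≤ β} (−1)^{|β−γ|} C(β,γ) (A_nγ)‾`. -/
noncomputable def cvec (n : ℕ) (β : ℕ × ℕ × ℕ) : (Lam2 n) → ℂ :=
  ∑ γ ∈ (range (β.1+1)) ×ˢ (range (β.2.1+1)) ×ˢ (range (β.2.2+1)),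
    (((-1 : ℂ) ^ ((β.1 + β.2.1 + β.2.2) - (γ.1 + γ.2.1 + γ.2.2))) *
      ((β.1.choose γ.1 * β.2.1.choose γ.2.1 * β.2.2.choose γ.2.2 : ℕ) : ℂ)) •
      vbar n (Amap n γ)

/-- `J ∈ S_{A_n}`: `J ⊆ Λ_{3,n}`, `|J| = λ_{2,n}`, `det L^c_J ≠ 0`. -/
def memSA (n : ℕ) (J : Finset (ℕ × ℕ × ℕ)) : Prop :=
  J ⊆ Lam3 n ∧ J.card = (Lam2 n).card ∧
    ∀ e : (Lam2 n) ≃ J,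
      (Matrix.of fun i j : (Lam2 n) => cvec n (e i).1 j).det ≠ 0

/-- `m_J = Σ_{β ∈ J} A_nβ`. -/
def mJ (n : ℕ) (J : Finset (ℕ × ℕ × ℕ)) : ℕ × ℕ := ∑ β ∈ J, Amap n β

/-- `f_k(v) = k·v₁ + (1−k)·v₂`. -/
def fk (k : ℕ) (v : ℕ × ℕ) : ℤ := (k : ℤ) * v.1 + (1 - (k : ℤ)) * v.2

/-- Data of a sequence `η = (z, d₀, d₁, …, d_r)`. -/
structure OmegaData where
  r : ℕ
  z : Bool
  d : ℕ → ℕ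

/-- `η ∈ Ω`: `d₀ = 0`, `d_i ≥ 1` for `1 ≤ i ≤ r` (and `d_i = 0` beyond `r`),
and `d₀ + ⋯ + d_r = n`. -/
def OmegaData.IsOmega (n : ℕ) (η : OmegaData) : Prop :=
  η.d 0 = 0 ∧ (∀ i, 1 ≤ i → i ≤ η.r → 1 ≤ η.d i) ∧
  (∀ i, η.r < i → η.d i = 0) ∧
  (∑ i ∈ range (η.r + 1), η.d i) = n

/-- The unique `t` with `Σ_{i=0}^{t−1} d_i < j ≤ Σ_{i=0}^{t} d_i`. -/
noncomputable def tIdx (η : OmegaData) (j : ℕ) : ℕ :=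
  sInf {t | j ≤ ∑ i ∈ range (t+1), η.d i}

/-- The vector `v_{j,η} ∈ ℕ²`. -/
noncomputable def vvec (η : OmegaData) (j : ℕ) : ℕ × ℕ :=
  let t := tIdx η j
  let c := j - ∑ i ∈ range t, η.d i
  let a := (∑ i ∈ range t, if (Odd i ↔ Odd t) then η.d i else 0) + c
  if (η.z = true) ↔ Odd t then (a, 0) else (0, a)

/-- `T_{j,η}` for `1 ≤ j ≤ n`, and `T_{0,η} = {(1,1),…,(n,n)}`. -/
noncomputable def Tj (n : ℕ) (η : OmegaData) (j : ℕ) : Finset (ℕ × ℕ) :=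
  if j = 0 then (range n).image (fun q => (q+1, q+1))
  else (range (n - j + 1)).image (fun p => vvec η j + (p, p))

/-- `T_η = ⋃_{j=0}^{n} T_{j,η}`. -/
noncomputable def Tset (n : ℕ) (η : OmegaData) : Finset (ℕ × ℕ) :=
  (range (n+1)).biUnion (fun j => Tj n η j)

/-- `r_{i,η} = n·π₂(v_{i,η})`. -/
noncomputable def rshift (n : ℕ) (η : OmegaData) (i : ℕ) : ℕ := n * (vvec η i).2

/-- `T'_η = T_{0,η} ∪ ⋃_{i=1}^{n} (T_{i,η} + r_{i,η})`. -/
noncomputable def Tset' (n : ℕ) (η : OmegaData) : Finset (ℕ × ℕ) :=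
  Tj n η 0 ∪ (Finset.Icc 1 n).biUnion
    (fun i => (Tj n η i).image (fun v => v + (rshift n η i, rshift n η i)))

/-- `J_η`: the (unique) subset of `Λ_{3,n}` with `A_n(J_η) = T'_η`. -/
noncomputable def Jset (n : ℕ) (η : OmegaData) : Finset (ℕ × ℕ × ℕ) :=
  (Lam3 n).filter (fun β => Amap n β ∈ Tset' n η)

/-- `z_k = 1` iff `f_k((1,0)) ≤ f_k((n,n+1))`. -/
def zk (n k : ℕ) : Bool := decide (fk k (1, 0) ≤ fk k (n, n+1))

/-- `t_l` in the recursive definition of `η_k`, where `O`, `E` are the odd- and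
even-indexed partial sums `Σ_{j<l, j odd} d_{k,j}` and `Σ_{j<l, j even} d_{k,j}`. -/
noncomputable def tval (n k : ℕ) (l O E : ℕ) : ℕ :=
  let w := (if Odd l then E else O) + 1
  if ((zk n k = true) ↔ Odd l) then
    sSup {m : ℕ | (m : ℤ) * fk k (1, 0) ≤ fk k (w * n, w * (n+1))}
  else
    sSup {m : ℕ | (m : ℤ) * fk k (n, n+1) ≤ fk k (w, 0)}

/-- The pair `(Σ_{j≤l, j odd} d_{k,j}, Σ_{j≤l, j even} d_{k,j})` of the recursion
defining `η_k`. -/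
noncomputable def oeSums (n k : ℕ) : ℕ → ℕ × ℕ
  | 0 => (0, 0)
  | l + 1 =>
    let p := oeSums n k l
    let O := p.1
    let E := p.2
    let S := O + E
    let dnext := if S < n then
        min (n - S) (tval n k (l+1) O E - (if Odd (l+1) then O else E))
      else 0
    if Odd (l+1) then (O + dnext, E) else (O, E + dnext)

/-- `d_{k,l}`. -/
noncomputable def dk (n k : ℕ) : ℕ → ℕ
  | 0 => 0
  | l + 1 =>
    let p := oeSums n k l
    let O := p.1
    let E := p.2
    let S := O + E
    if S < n then
      min (n - S) (tval n k (l+1) O E - (if Odd (l+1) then O else E))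
    else 0

/-- `η_k = (z_k, d_{k,0}, …, d_{k,r})`, where `r` is the first index with
`Σ_{j=0}^{r} d_{k,j} = n`. -/
noncomputable def etak (n k : ℕ) : OmegaData :=
  { r := sInf {r | ∑ j ∈ range (r+1), dk n k j = n},
    z := zk n k,
    d := dk n k }

namespace Stmt1Aux

open Function
open scoped fwdDiff

/-- monomial function on ℕ² -/
noncomputable def mono (ab : ℕ × ℕ) : ℕ × ℕ → ℂ :=
  fun v => (v.1 : ℂ) ^ ab.1 * (v.2 : ℂ) ^ ab.2

/-- functions of "total degree ≤ m" -/
noncomputable def Deg (m : ℕ) : Submodule ℂ ((ℕ × ℕ) → ℂ) :=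
  Submodule.span ℂ (mono '' {ab | ab.1 + ab.2 ≤ m})

lemma mono_mem_deg {ab : ℕ × ℕ} {m : ℕ} (h : ab.1 + ab.2 ≤ m) : mono ab ∈ Deg m :=
  Submodule.subset_span ⟨ab, h, rfl⟩

lemma deg_mono_le {m m' : ℕ} (h : m ≤ m') : Deg m ≤ Deg m' :=
  Submodule.span_mono (Set.image_mono fun _ hab => le_trans hab h)

/-- discrete partial difference in 1st variable -/
noncomputable def D1 (f : (ℕ × ℕ) → ℂ) : (ℕ × ℕ) → ℂ := fun v => f (v.1 + 1, v.2) - f v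
/-- discrete partial difference in 2nd variable -/
noncomputable def D2 (f : (ℕ × ℕ) → ℂ) : (ℕ × ℕ) → ℂ := fun v => f (v.1, v.2 + 1) - f v

lemma D1_zero : D1 0 = 0 := by ext v; simp [D1]
lemma D2_zero : D2 0 = 0 := by ext v; simp [D2]

lemma D1_add (f g : (ℕ × ℕ) → ℂ) : D1 (f + g) = D1 f + D1 g := by
  ext v; simp [D1]; ring
lemma D2_add (f g : (ℕ × ℕ) → ℂ) : D2 (f + g) = D2 f + D2 g := by
  ext v; simp [D2]; ring
lemma D1_smul (c : ℂ) (f : (ℕ × ℕ) → ℂ) : D1 (c • f) = c • D1 f := by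
  ext v; simp [D1]; ring
lemma D2_smul (c : ℂ) (f : (ℕ × ℕ) → ℂ) : D2 (c • f) = c • D2 f := by
  ext v; simp [D2]; ring

lemma D1_mono (a b : ℕ) :
    D1 (mono (a, b)) = ∑ i ∈ range a, ((a.choose i : ℂ)) • mono (i, b) := by
  ext v
  have hb : ((v.1 : ℂ) + 1) ^ a = ∑ i ∈ range (a + 1), (v.1:ℂ) ^ i * (a.choose i : ℂ) := by
    simpa using add_pow (v.1 : ℂ) 1 a
  simp only [D1, mono, Finset.sum_apply, Pi.smul_apply, smul_eq_mul]
  push_cast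
  rw [hb, Finset.sum_range_succ]
  simp only [Nat.choose_self, Nat.cast_one, mul_one]
  rw [add_mul, Finset.sum_mul]
  rw [add_sub_cancel_right]
  exact Finset.sum_congr rfl fun i _ => by ring

lemma D2_mono (a b : ℕ) :
    D2 (mono (a, b)) = ∑ i ∈ range b, ((b.choose i : ℂ)) • mono (a, i) := by
  ext v
  have hb : ((v.2 : ℂ) + 1) ^ b = ∑ i ∈ range (b + 1), (v.2:ℂ) ^ i * (b.choose i : ℂ) := by
    simpa using add_pow (v.2 : ℂ) 1 b
  simp only [D2, mono, Finset.sum_apply, Pi.smul_apply, smul_eq_mul]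
  push_cast
  rw [hb, Finset.sum_range_succ]
  simp only [Nat.choose_self, Nat.cast_one, mul_one]
  rw [mul_add, Finset.mul_sum]
  rw [add_sub_cancel_right]
  exact Finset.sum_congr rfl fun i _ => by ring

lemma D1_deg {m : ℕ} {f : (ℕ × ℕ) → ℂ} (hf : f ∈ Deg (m + 1)) : D1 f ∈ Deg m := by
  induction hf using Submodule.span_induction with
  | mem x hx =>
    obtain ⟨ab, hab, rfl⟩ := hx
    rw [show ab = (ab.1, ab.2) from rfl, D1_mono]
    refine Submodule.sum_mem _ fun i hi => Submodule.smul_mem _ _ (mono_mem_deg ?_)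
    simp only [Finset.mem_range] at hi
    simp only [Set.mem_setOf_eq] at hab
    omega
  | zero => rw [D1_zero]; exact Submodule.zero_mem _
  | add x y _ _ hx hy => rw [D1_add]; exact Submodule.add_mem _ hx hy
  | smul c x _ hx => rw [D1_smul]; exact Submodule.smul_mem _ _ hx

lemma D2_deg {m : ℕ} {f : (ℕ × ℕ) → ℂ} (hf : f ∈ Deg (m + 1)) : D2 f ∈ Deg m := by
  induction hf using Submodule.span_induction with
  | mem x hx =>
    obtain ⟨ab, hab, rfl⟩ := hx
    rw [show ab = (ab.1, ab.2) from rfl, D2_mono]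
    refine Submodule.sum_mem _ fun i hi => Submodule.smul_mem _ _ (mono_mem_deg ?_)
    simp only [Finset.mem_range] at hi
    simp only [Set.mem_setOf_eq] at hab
    omega
  | zero => rw [D2_zero]; exact Submodule.zero_mem _
  | add x y _ _ hx hy => rw [D2_add]; exact Submodule.add_mem _ hx hy
  | smul c x _ hx => rw [D2_smul]; exact Submodule.smul_mem _ _ hx

lemma D1_deg_zero {f : (ℕ × ℕ) → ℂ} (hf : f ∈ Deg 0) : D1 f = 0 := by
  induction hf using Submodule.span_induction with
  | mem x hx =>
    obtain ⟨ab, hab, rfl⟩ := hx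
    simp only [Set.mem_setOf_eq, Nat.le_zero, Nat.add_eq_zero] at hab
    ext v
    simp [D1, mono, hab.1, hab.2]
  | zero => exact D1_zero
  | add x y _ _ hx hy => rw [D1_add, hx, hy]; simp
  | smul c x _ hx => rw [D1_smul, hx]; simp

lemma D2_deg_zero {f : (ℕ × ℕ) → ℂ} (hf : f ∈ Deg 0) : D2 f = 0 := by
  induction hf using Submodule.span_induction with
  | mem x hx =>
    obtain ⟨ab, hab, rfl⟩ := hx
    simp only [Set.mem_setOf_eq, Nat.le_zero, Nat.add_eq_zero] at hab
    ext v
    simp [D2, mono, hab.1, hab.2]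
  | zero => exact D2_zero
  | add x y _ _ hx hy => rw [D2_add, hx, hy]; simp
  | smul c x _ hx => rw [D2_smul, hx]; simp

/-- the key vanishing lemma -/
lemma iter_vanish : ∀ (m : ℕ) (f : (ℕ × ℕ) → ℂ), f ∈ Deg m → ∀ k l : ℕ, m < k + l →
    D1^[k] (D2^[l] f) = 0 := by
  intro m
  induction m with
  | zero =>
    intro f hf k l hkl
    rcases Nat.eq_zero_or_pos l with rfl | hl
    · rcases Nat.eq_zero_or_pos k with rfl | hk
      · omega
      · obtain ⟨k', rfl⟩ := Nat.exists_eq_succ_of_ne_zero hk.ne'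
        simp only [iterate_zero, id_eq, Function.iterate_succ_apply, D1_deg_zero hf]
        exact Function.iterate_fixed D1_zero k'
    · obtain ⟨l', rfl⟩ := Nat.exists_eq_succ_of_ne_zero hl.ne'
      rw [Function.iterate_succ_apply, D2_deg_zero hf,
        Function.iterate_fixed D2_zero l']
      exact Function.iterate_fixed D1_zero k
  | succ m ih =>
    intro f hf k l hkl
    rcases Nat.eq_zero_or_pos l with rfl | hl
    · obtain ⟨k', rfl⟩ := Nat.exists_eq_succ_of_ne_zero (by omega : k ≠ 0)
      have : D1^[k'] (D2^[0] (D1 f)) = 0 := ih (D1 f) (D1_deg hf) k' 0 (by omega)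
      simpa only [iterate_zero, id_eq, Function.iterate_succ_apply] using this
    · obtain ⟨l', rfl⟩ := Nat.exists_eq_succ_of_ne_zero hl.ne'
      rw [Function.iterate_succ_apply]
      exact ih (D2 f) (D2_deg hf) k l' (by omega)


/-- Mahler coefficient of `f` at `α`. -/
noncomputable def wcoef (f : (ℕ × ℕ) → ℂ) (α : ℕ × ℕ) : ℂ :=
  (D1^[α.1] (D2^[α.2] f)) (0, 0)

lemma curry2 (l : ℕ) (f : (ℕ × ℕ) → ℂ) (x y : ℕ) :
    (D2^[l] f) (x, y) = (Δ_[1])^[l] (fun y' => f (x, y')) y := by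
  induction l generalizing y with
  | zero => simp
  | succ l ih =>
    rw [Function.iterate_succ_apply', Function.iterate_succ_apply']
    show (D2^[l] f) (x, y+1) - (D2^[l] f) (x, y) = _
    rw [ih, ih]
    rfl

lemma curry1 (k : ℕ) (g : (ℕ × ℕ) → ℂ) (x y : ℕ) :
    (D1^[k] g) (x, y) = (Δ_[1])^[k] (fun x' => g (x', y)) x := by
  induction k generalizing x with
  | zero => simp
  | succ k ih =>
    rw [Function.iterate_succ_apply', Function.iterate_succ_apply']
    show (D1^[k] g) (x+1, y) - (D1^[k] g) (x, y) = _
    rw [ih, ih]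
    rfl

lemma newton1 (f : ℕ → ℂ) (x : ℕ) :
    f x = ∑ k ∈ range (x + 1), x.choose k • (Δ_[1])^[k] f 0 := by
  have := shift_eq_sum_fwdDiff_iter (1 : ℕ) f x 0
  simpa using this

lemma newton2 (f : (ℕ × ℕ) → ℂ) (v : ℕ × ℕ) :
    f v = ∑ α ∈ range (v.1 + 1) ×ˢ range (v.2 + 1),
      ((v.1.choose α.1 * v.2.choose α.2 : ℕ) : ℂ) * wcoef f α := by
  obtain ⟨x, y⟩ := v
  rw [Finset.sum_product]
  have h1 : f (x, y) = ∑ l ∈ range (y + 1), y.choose l • (D2^[l] f) (x, 0) := by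
    have := newton1 (fun y' => f (x, y')) y
    simp only [curry2]
    exact this
  rw [h1]
  have h2 : ∀ l, (D2^[l] f) (x, 0)
      = ∑ k ∈ range (x + 1), x.choose k • (D1^[k] (D2^[l] f)) (0, 0) := by
    intro l
    have := newton1 (fun x' => (D2^[l] f) (x', 0)) x
    simp only [curry1]
    exact this
  calc ∑ l ∈ range (y + 1), y.choose l • (D2^[l] f) (x, 0)
      = ∑ l ∈ range (y + 1), ∑ k ∈ range (x + 1),
          y.choose l • (x.choose k • (D1^[k] (D2^[l] f)) (0, 0)) := by
        refine Finset.sum_congr rfl fun l _ => ?_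
        rw [h2 l, Finset.smul_sum]
    _ = _ := by
        rw [Finset.sum_comm]
        refine Finset.sum_congr rfl fun k _ => Finset.sum_congr rfl fun l _ => ?_
        simp only [wcoef]
        push_cast
        rw [nsmul_eq_mul, nsmul_eq_mul]
        ring

lemma bridge {n : ℕ} {f : (ℕ × ℕ) → ℂ} (hf : f ∈ Deg n) (h0 : f (0, 0) = 0)
    {v : ℕ × ℕ} (hv1 : v.1 ≤ n) (hv2 : v.2 ≤ n) :
    ∑ α ∈ Lam2 n, wcoef f α * ((v.1.choose α.1 * v.2.choose α.2 : ℕ) : ℂ) = f v := by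
  classical
  set F : ℕ × ℕ → ℂ := fun α => wcoef f α * ((v.1.choose α.1 * v.2.choose α.2 : ℕ) : ℂ)
    with hF
  have hsplit : ∑ α ∈ (range (n+1)) ×ˢ (range (n+1)), F α = ∑ α ∈ Lam2 n, F α := by
    rw [Lam2, ← Finset.sum_filter_add_sum_filter_not
      ((range (n+1)) ×ˢ (range (n+1))) (fun α => 1 ≤ α.1 + α.2 ∧ α.1 + α.2 ≤ n) F]
    have : ∑ α ∈ ((range (n+1)) ×ˢ (range (n+1))).filter
        (fun α => ¬(1 ≤ α.1 + α.2 ∧ α.1 + α.2 ≤ n)), F α = 0 := by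
      refine Finset.sum_eq_zero fun α hα => ?_
      simp only [Finset.mem_filter, Finset.mem_product, Finset.mem_range] at hα
      rcases hα with ⟨⟨_, _⟩, hcond⟩
      by_cases hz : α.1 + α.2 = 0
      · have : α = (0, 0) := by ext <;> omega
        subst this
        simp only [hF, wcoef, Function.iterate_zero, id_eq, h0, zero_mul]
      · have hgt : n < α.1 + α.2 := by omega
        have := iter_vanish n f hf α.1 α.2 hgt
        simp only [hF, wcoef, this, Pi.zero_apply, zero_mul]
    rw [this, add_zero]
  rw [← hsplit]
  have hsubset : (range (v.1 + 1)) ×ˢ (range (v.2 + 1)) ⊆ (range (n+1)) ×ˢ (range (n+1)) := by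
    refine Finset.product_subset_product ?_ ?_ <;>
      · intro x hx; simp only [Finset.mem_range] at hx ⊢; omega
  rw [← Finset.sum_subset hsubset (fun α hα hα' => ?_)]
  · rw [newton2 f v]
    exact Finset.sum_congr rfl fun α _ => by rw [hF]; ring
  · simp only [Finset.mem_product, Finset.mem_range] at hα hα'
    have : (v.1.choose α.1 * v.2.choose α.2 : ℕ) = 0 := by
      rcases not_and_or.mp hα' with h | h
      · have := Nat.choose_eq_zero_of_lt (show v.1 < α.1 by omega)
        simp [this]
      · have := Nat.choose_eq_zero_of_lt (show v.2 < α.2 by omega)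
        simp [this]
    rw [hF]
    simp [this]


lemma mul_deg {a b : ℕ} {f g : (ℕ × ℕ) → ℂ} (hf : f ∈ Deg a) (hg : g ∈ Deg b) :
    f * g ∈ Deg (a + b) := by
  induction hf using Submodule.span_induction with
  | mem x hx =>
    obtain ⟨p, hp, rfl⟩ := hx
    simp only [Set.mem_setOf_eq] at hp
    induction hg using Submodule.span_induction with
    | mem y hy =>
      obtain ⟨q, hq, rfl⟩ := hy
      simp only [Set.mem_setOf_eq] at hq
      have : mono p * mono q = mono (p.1 + q.1, p.2 + q.2) := by
        ext v; simp only [Pi.mul_apply, mono, pow_add]; ring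
      rw [this]
      exact mono_mem_deg (by simp only []; omega)
    | zero => rw [mul_zero]; exact Submodule.zero_mem _
    | add x y _ _ hx hy => rw [mul_add]; exact Submodule.add_mem _ hx hy
    | smul c x _ hx => rw [mul_smul_comm]; exact Submodule.smul_mem _ _ hx
  | zero => rw [zero_mul]; exact Submodule.zero_mem _
  | add x y _ _ hx hy => rw [add_mul]; exact Submodule.add_mem _ hx hy
  | smul c x _ hx => rw [smul_mul_assoc]; exact Submodule.smul_mem _ _ hx

lemma prod_deg {ι : Type*} [DecidableEq ι] (s : Finset ι) (F : ι → (ℕ × ℕ) → ℂ)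
    (hF : ∀ i ∈ s, F i ∈ Deg 1) : (∏ i ∈ s, F i) ∈ Deg s.card := by
  induction s using Finset.cons_induction with
  | empty =>
    simp only [Finset.prod_empty, Finset.card_empty]
    have : (1 : (ℕ × ℕ) → ℂ) = mono (0, 0) := by ext v; simp [mono]
    rw [this]; exact mono_mem_deg (by simp)
  | cons i s hi ih =>
    rw [Finset.prod_cons, Finset.card_cons]
    have h1 : F i ∈ Deg 1 := hF i (Finset.mem_cons_self i s)
    have h2 : (∏ j ∈ s, F j) ∈ Deg s.card := ih fun j hj => hF j (Finset.mem_cons.2 (Or.inr hj))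
    have := mul_deg h1 h2
    rwa [add_comm 1 s.card] at this

lemma affine1_deg (c : ℂ) : (fun v : ℕ × ℕ => (v.1 : ℂ) - (v.2 : ℂ) - c) ∈ Deg 1 := by
  have : (fun v : ℕ × ℕ => (v.1 : ℂ) - (v.2 : ℂ) - c)
      = mono (1, 0) + (-1 : ℂ) • mono (0, 1) + (-c) • mono (0, 0) := by
    ext v; simp [mono]; ring
  rw [this]
  exact Submodule.add_mem _
    (Submodule.add_mem _ (mono_mem_deg (by simp)) (Submodule.smul_mem _ _ (mono_mem_deg (by simp))))
    (Submodule.smul_mem _ _ (mono_mem_deg (by simp)))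

lemma affine2_deg (c : ℂ) : (fun v : ℕ × ℕ => (v.1 : ℂ) - c) ∈ Deg 1 := by
  have : (fun v : ℕ × ℕ => (v.1 : ℂ) - c) = mono (1, 0) + (-c) • mono (0, 0) := by
    ext v; simp [mono]; ring
  rw [this]
  exact Submodule.add_mem _ (mono_mem_deg (by simp))
    (Submodule.smul_mem _ _ (mono_mem_deg (by simp)))

lemma smul_deg {m : ℕ} {f : (ℕ × ℕ) → ℂ} (c : ℂ) (hf : f ∈ Deg m) : c • f ∈ Deg m :=
  Submodule.smul_mem _ _ hf


variable {n : ℕ} {η : OmegaData}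

/-- partial sum `S t = Σ_{i<t} d_i`. -/
def Ssum (η : OmegaData) (t : ℕ) : ℕ := ∑ i ∈ range t, η.d i

lemma Ssum_mono {t t' : ℕ} (h : t ≤ t') : Ssum η t ≤ Ssum η t' :=
  Finset.sum_le_sum_of_subset (Finset.range_subset_range.2 h)

lemma Ssum_succ (t : ℕ) : Ssum η (t + 1) = Ssum η t + η.d t := Finset.sum_range_succ _ _

/-- the `a` of `vvec`. -/
noncomputable def aval (η : OmegaData) (j : ℕ) : ℕ :=
  (∑ i ∈ range (tIdx η j), if (Odd i ↔ Odd (tIdx η j)) then η.d i else 0)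
    + (j - Ssum η (tIdx η j))

lemma vvec_eq (η : OmegaData) (j : ℕ) :
    vvec η j = if (η.z = true) ↔ Odd (tIdx η j) then (aval η j, 0) else (0, aval η j) := rfl

section facts
lemma tIdx_spec_upper (hη : η.IsOmega n) {j : ℕ} (hjn : j ≤ n) : j ≤ Ssum η (tIdx η j + 1) := by
  have hne : η.r ∈ {t | j ≤ ∑ i ∈ range (t+1), η.d i} := by
    simp only [Set.mem_setOf_eq, hη.2.2.2]; exact hjn
  exact Nat.sInf_mem ⟨η.r, hne⟩

lemma tIdx_le_r (hη : η.IsOmega n) {j : ℕ} (hjn : j ≤ n) : tIdx η j ≤ η.r :=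
  Nat.sInf_le (by simp only [Set.mem_setOf_eq, hη.2.2.2]; exact hjn)

lemma tIdx_spec_lower {j : ℕ} (hj1 : 1 ≤ j) : Ssum η (tIdx η j) < j := by
  rcases Nat.eq_zero_or_pos (tIdx η j) with h0 | hpos
  · rw [h0]; simp only [Ssum, Finset.range_zero, Finset.sum_empty]; omega
  · obtain ⟨t', ht'⟩ := Nat.exists_eq_succ_of_ne_zero hpos.ne'
    have : t' ∉ {t | j ≤ ∑ i ∈ range (t+1), η.d i} :=
      Nat.notMem_of_lt_sInf (by rw [← tIdx]; omega)
    simp only [Set.mem_setOf_eq, not_le] at this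
    rw [ht', Ssum]
    exact this

lemma tIdx_pos (hη : η.IsOmega n) {j : ℕ} (hj1 : 1 ≤ j) (hjn : j ≤ n) : 1 ≤ tIdx η j := by
  by_contra h
  have h0 : tIdx η j = 0 := by omega
  have := tIdx_spec_upper hη hjn (j := j)
  rw [h0] at this
  simp only [Ssum, zero_add, Finset.sum_range_one, hη.1] at this
  omega

lemma c_bounds (hη : η.IsOmega n) {j : ℕ} (hj1 : 1 ≤ j) (hjn : j ≤ n) :
    1 ≤ j - Ssum η (tIdx η j) ∧ j - Ssum η (tIdx η j) ≤ η.d (tIdx η j) := by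
  have h1 := tIdx_spec_lower (η := η) hj1
  have h2 := tIdx_spec_upper hη hjn (j := j)
  rw [Ssum_succ] at h2
  omega

lemma aval_pos (hη : η.IsOmega n) {j : ℕ} (hj1 : 1 ≤ j) (hjn : j ≤ n) : 1 ≤ aval η j := by
  have := c_bounds hη hj1 hjn
  unfold aval
  omega

lemma aval_le {j : ℕ} (hj1 : 1 ≤ j) : aval η j ≤ j := by
  have h1 := tIdx_spec_lower (η := η) hj1
  have hsum : (∑ i ∈ range (tIdx η j), if (Odd i ↔ Odd (tIdx η j)) then η.d i else 0)
      ≤ Ssum η (tIdx η j) := by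
    refine Finset.sum_le_sum fun i _ => ?_
    split <;> omega
  unfold aval
  omega

lemma tIdx_mono (hη : η.IsOmega n) {j j' : ℕ} (h : j ≤ j') (hj'n : j' ≤ n) : tIdx η j ≤ tIdx η j' := by
  refine Nat.sInf_le ?_
  have := tIdx_spec_upper hη hj'n (j := j')
  simp only [Set.mem_setOf_eq]
  calc j ≤ j' := h
    _ ≤ Ssum η (tIdx η j' + 1) := this

lemma aval_strict_mono (hη : η.IsOmega n) {j j' : ℕ} (hj1 : 1 ≤ j) (hjj' : j < j') (hj'n : j' ≤ n)
    (hpar : Odd (tIdx η j) ↔ Odd (tIdx η j')) : aval η j < aval η j' := by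
  have htle : tIdx η j ≤ tIdx η j' := tIdx_mono hη (le_of_lt hjj') hj'n
  have hc' := c_bounds hη (by omega : 1 ≤ j') hj'n
  have hc := c_bounds hη hj1 (by omega : j ≤ n)
  rcases eq_or_lt_of_le htle with heq | hlt
  · unfold aval
    have h1 := tIdx_spec_lower (η := η) hj1
    rw [← heq] at hc' ⊢
    omega
  · -- t < t', same parity
    set t := tIdx η j with ht
    set t' := tIdx η j' with ht'
    have e1 : aval η j = (∑ i ∈ range t, if (Odd i ↔ Odd t) then η.d i else 0)
        + (j - Ssum η t) := rfl
    have e2 : aval η j' = (∑ i ∈ range t', if (Odd i ↔ Odd t') then η.d i else 0)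
        + (j' - Ssum η t') := rfl
    have step2 : (∑ i ∈ range t, if (Odd i ↔ Odd t) then η.d i else 0) + η.d t
        = ∑ i ∈ range (t+1), if (Odd i ↔ Odd t) then η.d i else 0 := by
      rw [Finset.sum_range_succ, if_pos Iff.rfl]
    have step3 : (∑ i ∈ range (t+1), if (Odd i ↔ Odd t) then η.d i else 0)
        = ∑ i ∈ range (t+1), if (Odd i ↔ Odd t') then η.d i else 0 := by
      refine Finset.sum_congr rfl fun i _ => ?_
      exact if_congr (iff_congr Iff.rfl hpar) rfl rfl
    have step4 : (∑ i ∈ range (t+1), if (Odd i ↔ Odd t') then η.d i else 0)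
        ≤ ∑ i ∈ range t', if (Odd i ↔ Odd t') then η.d i else 0 :=
      Finset.sum_le_sum_of_subset (Finset.range_subset_range.2 (by omega))
    rw [e1, e2]
    have hc2 := hc.2
    have hc1' := hc'.1
    omega

lemma tIdx_zero : tIdx η 0 = 0 :=
  Nat.sInf_eq_zero.2 (Or.inl (Nat.zero_le _))

lemma vvec_zero : vvec η 0 = (0, 0) := by
  have haval : aval η 0 = 0 := by
    simp [aval, tIdx_zero, Ssum]
  rw [vvec_eq, haval]
  split <;> rfl

/-- the line value `x - y`. -/
def lineZ (v : ℕ × ℕ) : ℤ := (v.1 : ℤ) - (v.2 : ℤ)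

noncomputable def cline (η : OmegaData) (j : ℕ) : ℤ := lineZ (vvec η j)

lemma cline_zero : cline η 0 = 0 := by rw [cline, vvec_zero]; rfl

lemma cline_form (j : ℕ) : cline η j =
    if (η.z = true) ↔ Odd (tIdx η j) then (aval η j : ℤ) else -(aval η j : ℤ) := by
  rw [cline, vvec_eq]
  split <;> simp [lineZ]

lemma cline_ne (hη : η.IsOmega n) {j j' : ℕ} (hjj' : j < j') (hj'n : j' ≤ n) :
    cline η j ≠ cline η j' := by
  classical
  have haj' : 1 ≤ aval η j' := aval_pos hη (by omega) hj'n
  rcases Nat.eq_zero_or_pos j with rfl | hj1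
  · rw [cline_zero, cline_form]
    split <;> [skip; skip] <;> intro h <;> omega
  · rw [cline_form, cline_form]
    by_cases hpar : Odd (tIdx η j) ↔ Odd (tIdx η j')
    · have hlt : aval η j < aval η j' := aval_strict_mono hη hj1 hjj' hj'n hpar
      by_cases hz : (η.z = true) ↔ Odd (tIdx η j)
      · rw [if_pos hz, if_pos (hz.trans hpar)]
        intro h; omega
      · rw [if_neg hz, if_neg (fun h => hz (h.trans hpar.symm))]
        intro h; omega
    · have haj : 1 ≤ aval η j := aval_pos hη hj1 (by omega)
      by_cases hz : (η.z = true) ↔ Odd (tIdx η j)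
      · rw [if_pos hz, if_neg (fun h => hpar (hz.symm.trans h))]
        intro h; omega
      · rw [if_neg hz, if_pos (by tauto)]
        intro h; omega

/-- node set: `x`-coordinates of the points on line `j` (plus origin for `j = 0`). -/
noncomputable def nodes (n : ℕ) (η : OmegaData) (j : ℕ) : Finset ℕ :=
  if j = 0 then range (n+1) else (range (n - j + 1)).image (fun p => (vvec η j).1 + p)

lemma mem_Tj_iff {j : ℕ} (hj : j ≠ 0) {v : ℕ × ℕ} :
    v ∈ Tj n η j ↔ ∃ p ≤ n - j, v = vvec η j + (p, p) := by
  rw [Tj, if_neg hj]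
  simp only [Finset.mem_image, Finset.mem_range]
  constructor
  · rintro ⟨p, hp, rfl⟩; exact ⟨p, by omega, rfl⟩
  · rintro ⟨p, hp, rfl⟩; exact ⟨p, by omega, rfl⟩

lemma mem_Tj0_iff {v : ℕ × ℕ} : v ∈ Tj n η 0 ↔ ∃ q < n, v = (q+1, q+1) := by
  rw [Tj, if_pos rfl]
  simp only [Finset.mem_image, Finset.mem_range]
  constructor
  · rintro ⟨q, hq, rfl⟩; exact ⟨q, hq, rfl⟩
  · rintro ⟨q, hq, rfl⟩; exact ⟨q, hq, rfl⟩

lemma vvec_cases (η : OmegaData) (j : ℕ) :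
    vvec η j = (aval η j, 0) ∨ vvec η j = (0, aval η j) := by
  rw [vvec_eq]; split <;> [left; right] <;> rfl

lemma lineZ_mem_Tj (hη : η.IsOmega n) {j : ℕ} (hjn : j ≤ n) {v : ℕ × ℕ}
    (hv : v ∈ Tj n η j) : lineZ v = cline η j := by
  rcases Nat.eq_zero_or_pos j with rfl | hj1
  · obtain ⟨q, _, rfl⟩ := mem_Tj0_iff.1 hv
    rw [cline_zero]; simp [lineZ]
  · obtain ⟨p, _, rfl⟩ := (mem_Tj_iff (by omega)).1 hv
    rw [cline, lineZ, lineZ]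
    push_cast [Prod.fst_add, Prod.snd_add]
    ring

lemma coords_mem_Tj (hη : η.IsOmega n) {j : ℕ} (hjn : j ≤ n) {v : ℕ × ℕ}
    (hv : v ∈ Tj n η j) : v.1 ≤ n ∧ v.2 ≤ n := by
  rcases Nat.eq_zero_or_pos j with rfl | hj1
  · obtain ⟨q, hq, rfl⟩ := mem_Tj0_iff.1 hv
    simp; omega
  · obtain ⟨p, hp, rfl⟩ := (mem_Tj_iff (by omega)).1 hv
    have hle := aval_le (η := η) hj1
    rcases vvec_cases η j with h | h <;> rw [h] <;> simp [Prod.fst_add, Prod.snd_add] <;> omega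

lemma fst_mem_nodes (hη : η.IsOmega n) {j : ℕ} (hjn : j ≤ n) {v : ℕ × ℕ}
    (hv : v ∈ Tj n η j) : v.1 ∈ nodes n η j := by
  rcases Nat.eq_zero_or_pos j with rfl | hj1
  · obtain ⟨q, hq, rfl⟩ := mem_Tj0_iff.1 hv
    rw [nodes, if_pos rfl]
    simp only [Finset.mem_range]
    omega
  · obtain ⟨p, hp, rfl⟩ := (mem_Tj_iff (by omega)).1 hv
    rw [nodes, if_neg (by omega)]
    refine Finset.mem_image.2 ⟨p, Finset.mem_range.2 (by omega), rfl⟩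

lemma fst_inj_Tj {j : ℕ} {v w : ℕ × ℕ} (hv : v ∈ Tj n η j) (hw : w ∈ Tj n η j)
    (h : v.1 = w.1) : v = w := by
  rcases Nat.eq_zero_or_pos j with rfl | hj1
  · obtain ⟨q, _, rfl⟩ := mem_Tj0_iff.1 hv
    obtain ⟨q', _, rfl⟩ := mem_Tj0_iff.1 hw
    simp only at h
    simp [h]
  · obtain ⟨p, _, rfl⟩ := (mem_Tj_iff (by omega)).1 hv
    obtain ⟨p', _, rfl⟩ := (mem_Tj_iff (by omega)).1 hw
    simp only [Prod.fst_add] at h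
    have : p = p' := by omega
    rw [this]

lemma Tj_disjoint (hη : η.IsOmega n) {j j' : ℕ} (hjn : j ≤ n) (hj'n : j' ≤ n)
    (hne : j ≠ j') : Disjoint (Tj n η j) (Tj n η j') := by
  rw [Finset.disjoint_left]
  intro v hv hv'
  have h1 := lineZ_mem_Tj hη hjn hv
  have h2 := lineZ_mem_Tj hη hj'n hv'
  rcases Nat.lt_or_ge j j' with h | h
  · exact cline_ne hη h hj'n (h1 ▸ h2 ▸ (rfl : lineZ v = lineZ v))
  · exact cline_ne hη (show j' < j by omega) hjn (h2 ▸ h1 ▸ (rfl : lineZ v = lineZ v))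

lemma card_Tj0 : (Tj n η 0).card = n := by
  rw [Tj, if_pos rfl, Finset.card_image_of_injective _ (fun a b h => by
    have := congrArg Prod.fst h
    simpa using this), Finset.card_range]

lemma card_Tj {j : ℕ} (hj : j ≠ 0) : (Tj n η j).card = n - j + 1 := by
  rw [Tj, if_neg hj, Finset.card_image_of_injective _ (fun a b h => by
    have := congrArg Prod.fst h
    simpa using this), Finset.card_range]

lemma card_nodes0 : (nodes n η 0).card = n + 1 := by
  rw [nodes, if_pos rfl, Finset.card_range]

lemma card_nodes {j : ℕ} (hj : j ≠ 0) : (nodes n η j).card = n - j + 1 := by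
  rw [nodes, if_neg hj, Finset.card_image_of_injective _ (fun a b h => by omega),
    Finset.card_range]

lemma zero_mem_nodes0 : 0 ∈ nodes n η 0 := by
  rw [nodes, if_pos rfl]
  exact Finset.mem_range.2 (Nat.succ_pos n)

end facts

/-- Lagrange-type function for the point `u` on line `j`. -/
noncomputable def lag (n : ℕ) (η : OmegaData) (j : ℕ) (u : ℕ × ℕ) : (ℕ × ℕ) → ℂ :=
  (((∏ i ∈ range j, ((cline η j : ℂ) - (cline η i : ℂ))) *
     (∏ x ∈ (nodes n η j).erase u.1, ((u.1 : ℂ) - (x : ℂ))))⁻¹) •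
  ((fun v : ℕ × ℕ => ∏ i ∈ range j, (((v.1 : ℂ) - (v.2 : ℂ)) - (cline η i : ℂ))) *
   (fun v : ℕ × ℕ => ∏ x ∈ (nodes n η j).erase u.1, ((v.1 : ℂ) - (x : ℂ))))

lemma lag_deg {n : ℕ} {η : OmegaData} (hη : η.IsOmega n) {j : ℕ} (hjn : j ≤ n)
    {u : ℕ × ℕ} (hu : u ∈ Tj n η j) : lag n η j u ∈ Deg n := by
  have h1 : (fun v : ℕ × ℕ => ∏ i ∈ range j, (((v.1 : ℂ) - (v.2 : ℂ)) - (cline η i : ℂ)))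
      ∈ Deg j := by
    have : (fun v : ℕ × ℕ => ∏ i ∈ range j, (((v.1 : ℂ) - (v.2 : ℂ)) - (cline η i : ℂ)))
        = ∏ i ∈ range j, (fun v : ℕ × ℕ => ((v.1 : ℂ) - (v.2 : ℂ)) - (cline η i : ℂ)) := by
      ext v; simp [Finset.prod_apply]
    rw [this]
    have := prod_deg (range j)
      (fun i => (fun v : ℕ × ℕ => ((v.1 : ℂ) - (v.2 : ℂ)) - (cline η i : ℂ)))
      (fun i _ => affine1_deg _)
    rwa [Finset.card_range] at this
  have h2 : (fun v : ℕ × ℕ => ∏ x ∈ (nodes n η j).erase u.1, ((v.1 : ℂ) - (x : ℂ)))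
      ∈ Deg (n - j) := by
    have heq : (fun v : ℕ × ℕ => ∏ x ∈ (nodes n η j).erase u.1, ((v.1 : ℂ) - (x : ℂ)))
        = ∏ x ∈ (nodes n η j).erase u.1, (fun v : ℕ × ℕ => (v.1 : ℂ) - (x : ℂ)) := by
      ext v; simp [Finset.prod_apply]
    rw [heq]
    have hcard : ((nodes n η j).erase u.1).card = n - j := by
      rw [Finset.card_erase_of_mem (fst_mem_nodes hη hjn hu)]
      rcases Nat.eq_zero_or_pos j with rfl | hj
      · rw [card_nodes0]; omega
      · rw [card_nodes (by omega)]; omega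
    have := prod_deg ((nodes n η j).erase u.1)
      (fun x => (fun v : ℕ × ℕ => (v.1 : ℂ) - (x : ℂ))) (fun x _ => affine2_deg _)
    rwa [hcard] at this
  have h3 := mul_deg h1 h2
  rw [show j + (n - j) = n by omega] at h3
  exact smul_deg _ h3

lemma lag_at_zero {n : ℕ} {η : OmegaData} (hη : η.IsOmega n) {j : ℕ} (hjn : j ≤ n)
    {u : ℕ × ℕ} (hu : u ∈ Tj n η j) : lag n η j u (0, 0) = 0 := by
  rcases Nat.eq_zero_or_pos j with rfl | hj
  · obtain ⟨q, hq, rfl⟩ := mem_Tj0_iff.1 hu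
    have h0 : (0 : ℕ) ∈ (nodes n η 0).erase (q+1, q+1).1 :=
      Finset.mem_erase.2 ⟨by simp, zero_mem_nodes0⟩
    simp only [lag, Pi.smul_apply, Pi.mul_apply, smul_eq_mul]
    exact mul_eq_zero_of_right _
      (mul_eq_zero_of_right _ (Finset.prod_eq_zero h0 (by simp)))
  · have h0 : (0 : ℕ) ∈ range j := Finset.mem_range.2 hj
    simp only [lag, Pi.smul_apply, Pi.mul_apply, smul_eq_mul]
    exact mul_eq_zero_of_right _
      (mul_eq_zero_of_left (Finset.prod_eq_zero h0 (by simp [cline_zero])) _)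

lemma lag_at_lower {n : ℕ} {η : OmegaData} (hη : η.IsOmega n) {j j' : ℕ} (hjn : j ≤ n)
    (hj'j : j' < j) {u v : ℕ × ℕ} (hv : v ∈ Tj n η j') : lag n η j u v = 0 := by
  have hline : lineZ v = cline η j' := lineZ_mem_Tj hη (by omega) hv
  have hfac : ((v.1 : ℂ) - (v.2 : ℂ)) - (cline η j' : ℂ) = 0 := by
    have : ((v.1 : ℂ) - (v.2 : ℂ)) = ((lineZ v : ℤ) : ℂ) := by push_cast [lineZ]; ring
    rw [this, hline]; ring
  simp only [lag, Pi.smul_apply, Pi.mul_apply, smul_eq_mul]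
  exact mul_eq_zero_of_right _
    (mul_eq_zero_of_left (Finset.prod_eq_zero (Finset.mem_range.2 hj'j) hfac) _)

lemma lag_at_same {n : ℕ} {η : OmegaData} (hη : η.IsOmega n) {j : ℕ} (hjn : j ≤ n)
    {u v : ℕ × ℕ} (hu : u ∈ Tj n η j) (hv : v ∈ Tj n η j) (hne : v ≠ u) :
    lag n η j u v = 0 := by
  have hfst : v.1 ≠ u.1 := fun h => hne (fst_inj_Tj hv hu h)
  have hmem : v.1 ∈ (nodes n η j).erase u.1 :=
    Finset.mem_erase.2 ⟨hfst, fst_mem_nodes hη hjn hv⟩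
  simp only [lag, Pi.smul_apply, Pi.mul_apply, smul_eq_mul]
  exact mul_eq_zero_of_right _
    (mul_eq_zero_of_right _ (Finset.prod_eq_zero hmem (by simp)))

lemma lag_at_self {n : ℕ} {η : OmegaData} (hη : η.IsOmega n) {j : ℕ} (hjn : j ≤ n)
    {u : ℕ × ℕ} (hu : u ∈ Tj n η j) : lag n η j u u = 1 := by
  have hline : ((u.1 : ℂ) - (u.2 : ℂ)) = ((cline η j : ℤ) : ℂ) := by
    have h := lineZ_mem_Tj hη hjn hu
    have : ((u.1 : ℂ) - (u.2 : ℂ)) = ((lineZ u : ℤ) : ℂ) := by push_cast [lineZ]; ring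
    rw [this, h]
  have hA : (∏ i ∈ range j, ((cline η j : ℂ) - (cline η i : ℂ))) ≠ 0 := by
    refine Finset.prod_ne_zero_iff.2 fun i hi => ?_
    have := cline_ne hη (Finset.mem_range.1 hi) hjn
    intro hcontra
    apply this
    have : ((cline η i : ℤ) : ℂ) = ((cline η j : ℤ) : ℂ) := by
      have := sub_eq_zero.1 hcontra
      rw [this]
    exact_mod_cast this
  have hB : (∏ x ∈ (nodes n η j).erase u.1, ((u.1 : ℂ) - (x : ℂ))) ≠ 0 := by
    refine Finset.prod_ne_zero_iff.2 fun x hx => ?_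
    have hxne : x ≠ u.1 := (Finset.mem_erase.1 hx).1
    intro hcontra
    have : (x : ℂ) = (u.1 : ℂ) := by
      have := sub_eq_zero.1 hcontra
      rw [this]
    exact hxne (by exact_mod_cast this)
  simp only [lag, Pi.smul_apply, Pi.mul_apply, smul_eq_mul]
  have e1 : (∏ i ∈ range j, (((u.1 : ℂ) - (u.2 : ℂ)) - (cline η i : ℂ)))
      = ∏ i ∈ range j, ((cline η j : ℂ) - (cline η i : ℂ)) :=
    Finset.prod_congr rfl fun i _ => by rw [hline]
  rw [e1]
  exact inv_mul_cancel₀ (mul_ne_zero hA hB)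


lemma card_Tset {n : ℕ} {η : OmegaData} (hη : η.IsOmega n) :
    (Tset n η).card = n + ∑ k ∈ range n, (n - k) := by
  rw [Tset, Finset.card_biUnion]
  · rw [Finset.sum_range_succ']
    have h0 : (Tj n η 0).card = n := card_Tj0
    have hs : ∀ j ∈ range n, (Tj n η (j+1)).card = n - j := by
      intro j hj
      rw [card_Tj (Nat.succ_ne_zero j)]
      have := Finset.mem_range.1 hj
      omega
    rw [h0, Finset.sum_congr rfl hs, add_comm]
  · intro j hj j' hj' hne
    exact Tj_disjoint hη (by have := Finset.mem_range.1 hj; omega)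
      (by have := Finset.mem_range.1 hj'; omega) hne

lemma card_Lam2 (n : ℕ) : (Lam2 n).card = n + ∑ k ∈ range n, (n - k) := by
  classical
  rw [Lam2, Finset.card_filter, Finset.sum_product]
  have hinner : ∀ a, (∑ b ∈ range (n+1),
      if 1 ≤ (a, b).1 + (a, b).2 ∧ (a, b).1 + (a, b).2 ≤ n then 1 else 0)
      = ((range (n+1)).filter (fun b => 1 ≤ a + b ∧ a + b ≤ n)).card := by
    intro a
    rw [Finset.card_filter]
  calc (∑ a ∈ range (n+1), ∑ b ∈ range (n+1),
        if 1 ≤ (a, b).1 + (a, b).2 ∧ (a, b).1 + (a, b).2 ≤ n then 1 else 0)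
      = ∑ a ∈ range (n+1), ((range (n+1)).filter (fun b => 1 ≤ a + b ∧ a + b ≤ n)).card := by
        exact Finset.sum_congr rfl fun a _ => hinner a
    _ = n + ∑ k ∈ range n, (n - k) := by
        rw [Finset.sum_range_succ']
        have h0 : ((range (n+1)).filter (fun b => 1 ≤ 0 + b ∧ 0 + b ≤ n)).card = n := by
          have : (range (n+1)).filter (fun b => 1 ≤ 0 + b ∧ 0 + b ≤ n) = Finset.Icc 1 n := by
            ext b
            simp only [Finset.mem_filter, Finset.mem_range, Finset.mem_Icc]
            omega
          rw [this, Nat.card_Icc]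
          omega
        have hk : ∀ k ∈ range n,
            ((range (n+1)).filter (fun b => 1 ≤ (k+1) + b ∧ (k+1) + b ≤ n)).card = n - k := by
          intro k hk
          have hkn := Finset.mem_range.1 hk
          have : (range (n+1)).filter (fun b => 1 ≤ (k+1) + b ∧ (k+1) + b ≤ n)
              = range (n - k) := by
            ext b
            simp only [Finset.mem_filter, Finset.mem_range]
            omega
          rw [this, Finset.card_range]
        rw [h0, Finset.sum_congr rfl hk, add_comm]


end Stmt1Aux

open Stmt1Aux

theorem stmt1 (n : ℕ) (hn : 1 ≤ n) (η : OmegaData) (hη : η.IsOmega n) :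
    LinearIndependent ℂ (fun v : (Tset n η) => vbar n v.1) ∧
    Submodule.span ℂ (Set.range (fun v : (Tset n η) => vbar n v.1)) = ⊤ := by
  classical
  have hli : LinearIndependent ℂ (fun v : (Tset n η) => vbar n v.1) := by
    rw [Fintype.linearIndependent_iff]
    intro g hg
    set g' : ℕ × ℕ → ℂ := fun v => if h : v ∈ Tset n η then g ⟨v, h⟩ else 0 with hg'def
    have hg' : ∀ i : (Tset n η), g' i.1 = g i := by
      intro i
      simp only [hg'def, dif_pos i.2]
    have hcoord : ∀ α ∈ Lam2 n,
        ∑ v ∈ Tset n η, g' v * ((v.1.choose α.1 * v.2.choose α.2 : ℕ) : ℂ) = 0 := by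
      intro α hα
      have h1 := congrFun hg ⟨α, hα⟩
      rw [Finset.sum_apply] at h1
      calc ∑ v ∈ Tset n η, g' v * ((v.1.choose α.1 * v.2.choose α.2 : ℕ) : ℂ)
          = ∑ i : (Tset n η), g' i.1 * ((i.1.1.choose α.1 * i.1.2.choose α.2 : ℕ) : ℂ) :=
            (Finset.sum_coe_sort (Tset n η)
              (fun v => g' v * ((v.1.choose α.1 * v.2.choose α.2 : ℕ) : ℂ))).symm
        _ = ∑ i : (Tset n η), (g i • vbar n i.1) ⟨α, hα⟩ := by
            refine Finset.sum_congr rfl fun i _ => ?_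
            rw [hg' i]
            simp only [Pi.smul_apply, smul_eq_mul, vbar]
        _ = 0 := h1
    have hbox : ∀ v ∈ Tset n η, v.1 ≤ n ∧ v.2 ≤ n := by
      intro v hv
      obtain ⟨j', hj', hvj'⟩ := Finset.mem_biUnion.1 hv
      exact coords_mem_Tj hη (by have := Finset.mem_range.1 hj'; omega) hvj'
    have key : ∀ m : ℕ, ∀ j : ℕ, j ≤ n → n - j = m → ∀ u ∈ Tj n η j, g' u = 0 := by
      intro m
      induction m using Nat.strong_induction_on with
      | _ m ih =>
        intro j hjn hm u hu
        have hPdeg := lag_deg hη hjn hu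
        have hP0 := lag_at_zero hη hjn hu
        have hPsum : ∑ v ∈ Tset n η, g' v * lag n η j u v = 0 := by
          calc ∑ v ∈ Tset n η, g' v * lag n η j u v
              = ∑ v ∈ Tset n η, g' v * (∑ α ∈ Lam2 n, wcoef (lag n η j u) α *
                  ((v.1.choose α.1 * v.2.choose α.2 : ℕ) : ℂ)) := by
                refine Finset.sum_congr rfl fun v hv => ?_
                rw [bridge hPdeg hP0 (hbox v hv).1 (hbox v hv).2]
            _ = ∑ α ∈ Lam2 n, wcoef (lag n η j u) α *
                  (∑ v ∈ Tset n η, g' v * ((v.1.choose α.1 * v.2.choose α.2 : ℕ) : ℂ)) := by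
                simp_rw [Finset.mul_sum]
                rw [Finset.sum_comm]
                exact Finset.sum_congr rfl fun α _ => Finset.sum_congr rfl fun v _ => by ring
            _ = 0 := Finset.sum_eq_zero fun α hα => by rw [hcoord α hα, mul_zero]
        have hdis : Set.PairwiseDisjoint ↑(range (n+1)) (fun j' => Tj n η j') := by
          intro a ha b hb hab
          exact Tj_disjoint hη (by simp only [Finset.coe_range, Set.mem_Iio] at ha; omega)
            (by simp only [Finset.coe_range, Set.mem_Iio] at hb; omega) hab
        rw [show Tset n η = (range (n+1)).biUnion (fun j' => Tj n η j') from rfl,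
          Finset.sum_biUnion hdis] at hPsum
        have hmain : ∑ j' ∈ range (n+1), ∑ v ∈ Tj n η j', g' v * lag n η j u v
            = ∑ v ∈ Tj n η j, g' v * lag n η j u v := by
          refine Finset.sum_eq_single_of_mem j (Finset.mem_range.2 (by omega)) ?_
          intro j' hj' hne
          have hj'n : j' ≤ n := by have := Finset.mem_range.1 hj'; omega
          rcases Nat.lt_or_ge j' j with hlt | hge
          · exact Finset.sum_eq_zero fun v hv => by
              rw [lag_at_lower hη hjn hlt hv, mul_zero]
          · have hgt : j < j' := by omega
            refine Finset.sum_eq_zero fun v hv => ?_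
            have : g' v = 0 := ih (n - j') (by omega) j' hj'n rfl v hv
            rw [this, zero_mul]
        have hline : ∑ v ∈ Tj n η j, g' v * lag n η j u v = g' u := by
          rw [Finset.sum_eq_single_of_mem u hu (fun v hv hne =>
            by rw [lag_at_same hη hjn hu hv hne, mul_zero])]
          rw [lag_at_self hη hjn hu, mul_one]
        rw [hmain, hline] at hPsum
        exact hPsum
    intro i
    obtain ⟨j, hj, hij⟩ := Finset.mem_biUnion.1 i.2
    have := key (n - j) j (by have := Finset.mem_range.1 hj; omega) rfl i.1 hij
    rwa [hg' i] at this
  refine ⟨hli, ?_⟩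
  haveI : Nonempty (Tset n η) := by
    refine ⟨⟨(1, 1), ?_⟩⟩
    exact Finset.mem_biUnion.2 ⟨0, Finset.mem_range.2 (by omega),
      mem_Tj0_iff.2 ⟨0, by omega, rfl⟩⟩
  refine hli.span_eq_top_of_card_eq_finrank ?_
  rw [Fintype.card_coe, card_Tset hη, ← card_Lam2 n, Module.finrank_pi, Fintype.card_coe]
end

section
/- Let η ∈ Ω, l ∈ {1,…,n} and (r_1,…,r_l) ∈ ℕ^l. Then the ℂ-linear spans in ℂ^{Λ_{2,n}} satisfy span{v̄ : v ∈ T_{0,η} ∪ ⋃_{i=1}^{l} (T_{i,η} + r_i)} = span{v̄ : v ∈ ⋃_{i=0}^{l} T_{i,η}}. In particular, for every r ∈ ℕ, the vector (v_{l,η} + (r,r))‾ belongs to span{v̄ : v ∈ ⋃_{i=0}^{l} T_{i,η}}. -/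
open Finset

/-! ### Auxiliary material for `stmt2` -/

open Polynomial in
/-- The binomial coefficient polynomial `x ↦ C(x,k)` over `ℂ`. -/
noncomputable def binP (k : ℕ) : Polynomial ℂ :=
  Polynomial.C ((k.factorial : ℂ)⁻¹) * descPochhammer ℂ k

lemma binP_natDegree_le (k : ℕ) : (binP k).natDegree ≤ k :=
  (Polynomial.natDegree_C_mul_le _ _).trans (descPochhammer_natDegree ℂ k).le

lemma binP_eval_nat (m k : ℕ) : (binP k).eval (m : ℂ) = (m.choose k : ℂ) := by
  have h1 : ((descPochhammer ℂ k).eval (m : ℂ)) = (m.descFactorial k : ℂ) :=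
    descPochhammer_eval_eq_descFactorial ℂ m k
  have h2 : (m.descFactorial k) = k.factorial * m.choose k :=
    Nat.descFactorial_eq_factorial_mul_choose m k
  have h3 : (k.factorial : ℂ) ≠ 0 := Nat.cast_ne_zero.mpr k.factorial_ne_zero
  rw [binP, Polynomial.eval_mul, Polynomial.eval_C, h1, h2]
  push_cast
  field_simp

/-- `ℂ[t][u]`. -/
abbrev PP := Polynomial (Polynomial ℂ)

/-- Weighted degree bound: the `u^k`-coefficient has `t`-degree `≤ m - k`. -/
def Wdeg (m : ℕ) (p : PP) : Prop :=
  ∀ k, p.coeff k ≠ 0 → (p.coeff k).natDegree + k ≤ m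

lemma Wdeg.mono {m m' : ℕ} {p : PP} (h : Wdeg m p) (hm : m ≤ m') : Wdeg m' p :=
  fun k hk => (h k hk).trans hm

lemma Wdeg.zero (m : ℕ) : Wdeg m (0 : PP) := by
  intro k hk; simp at hk

lemma Wdeg.natDegree_le {m : ℕ} {p : PP} (h : Wdeg m p) (hp : p ≠ 0) : p.natDegree ≤ m :=
  le_trans (Nat.le_add_left _ _)
    (h p.natDegree (Polynomial.leadingCoeff_ne_zero.mpr hp))

lemma Wdeg.add {m : ℕ} {p q : PP} (hp : Wdeg m p) (hq : Wdeg m q) : Wdeg m (p + q) := by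
  intro k hk
  rw [Polynomial.coeff_add] at hk ⊢
  rcases eq_or_ne (p.coeff k) 0 with h | h
  · rw [h, zero_add] at hk ⊢; exact hq k hk
  rcases eq_or_ne (q.coeff k) 0 with h' | h'
  · rw [h', add_zero] at hk ⊢; exact hp k h
  have h1 := hp k h
  have h2 := hq k h'
  have h3 := Polynomial.natDegree_add_le (p.coeff k) (q.coeff k)
  rcases max_cases (p.coeff k).natDegree (q.coeff k).natDegree with ⟨he, _⟩ | ⟨he, _⟩ <;>
    rw [he] at h3 <;> omega

lemma Wdeg.sum {ι : Type*} {s : Finset ι} {f : ι → PP} {m : ℕ}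
    (h : ∀ i ∈ s, Wdeg m (f i)) : Wdeg m (∑ i ∈ s, f i) :=
  Finset.sum_induction f (Wdeg m) (fun _ _ => Wdeg.add) (Wdeg.zero m) h

lemma Wdeg.mul {m m' : ℕ} {p q : PP} (hp : Wdeg m p) (hq : Wdeg m' q) :
    Wdeg (m + m') (p * q) := by
  intro k hk
  have hkle : k ≤ m + m' := by
    have hpq : p * q ≠ 0 := fun h => hk (by simp [h])
    have hp0 : p ≠ 0 := fun h => hpq (by simp [h])
    have hq0 : q ≠ 0 := fun h => hpq (by simp [h])
    calc k ≤ (p * q).natDegree := Polynomial.le_natDegree_of_ne_zero hk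
      _ ≤ p.natDegree + q.natDegree := Polynomial.natDegree_mul_le
      _ ≤ m + m' := add_le_add (hp.natDegree_le hp0) (hq.natDegree_le hq0)
  rw [Polynomial.coeff_mul] at hk ⊢
  have hb : ((∑ x ∈ Finset.HasAntidiagonal.antidiagonal k, p.coeff x.1 * q.coeff x.2)).natDegree ≤ m + m' - k := by
    apply Polynomial.natDegree_sum_le_of_forall_le
    intro x hx
    rcases eq_or_ne (p.coeff x.1) 0 with h | h
    · simp [h]
    rcases eq_or_ne (q.coeff x.2) 0 with h' | h'
    · simp [h']
    have h1 := hp x.1 h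
    have h2 := hq x.2 h'
    have h3 := Polynomial.natDegree_mul_le (p := p.coeff x.1) (q := q.coeff x.2)
    have hx' : x.1 + x.2 = k := Finset.HasAntidiagonal.mem_antidiagonal.mp hx
    omega
  omega

lemma Wdeg.smul {m : ℕ} {p : PP} (c : ℂ) (hp : Wdeg m p) : Wdeg m (c • p) := by
  intro k hk
  rw [Polynomial.coeff_smul] at hk ⊢
  rcases eq_or_ne (p.coeff k) 0 with h | h
  · simp [h] at hk
  have h1 := Polynomial.natDegree_smul_le c (p.coeff k)
  have h2 := hp k h
  omega

lemma Wdeg.Cpoly {m : ℕ} {q : Polynomial ℂ} (hq : q.natDegree ≤ m) :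
    Wdeg m (Polynomial.C q : PP) := by
  intro k hk
  rw [Polynomial.coeff_C] at hk ⊢
  rcases eq_or_ne k 0 with rfl | h
  · simpa using hq
  · simp [h] at hk

lemma Wdeg.one : Wdeg 0 (1 : PP) := by
  simpa using Wdeg.Cpoly (q := 1) (by simp)

lemma Wdeg.CC {m : ℕ} (z : ℂ) : Wdeg m (Polynomial.C (Polynomial.C z) : PP) :=
  Wdeg.Cpoly (by simp)

/-- The element `u + t` of `ℂ[t][u]`. -/
noncomputable def xP : PP := Polynomial.X + Polynomial.C Polynomial.X

lemma Wdeg.xPbase : Wdeg 1 xP := by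
  intro k hk
  match k with
  | 0 => simp [xP, Polynomial.coeff_add, Polynomial.coeff_C]
  | 1 => simp [xP, Polynomial.coeff_add, Polynomial.coeff_C]
  | (k+2) => simp [xP, Polynomial.coeff_add, Polynomial.coeff_C, Polynomial.coeff_X] at hk

lemma Wdeg.xPpow (i : ℕ) : Wdeg i (xP ^ i) := by
  induction i with
  | zero => simpa using Wdeg.one
  | succ i ih => rw [pow_succ]; exact ih.mul Wdeg.xPbase

lemma Wdeg.aevalxP {f : Polynomial ℂ} {m : ℕ} (hf : f.natDegree ≤ m) :
    Wdeg m (Polynomial.aeval xP f) := by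
  rw [Polynomial.aeval_eq_sum_range]
  apply Wdeg.sum
  intro i hi
  have hi' : i ≤ m := by have := Finset.mem_range.mp hi; omega
  exact (Wdeg.smul _ (Wdeg.xPpow i)).mono hi'

/-- Evaluation `ℂ[t][u] → ℂ`, `u := a`, `t := b`. -/
noncomputable def evUT (a b : ℂ) : PP →+* ℂ :=
  (Polynomial.evalRingHom b).comp (Polynomial.evalRingHom (Polynomial.C a))

lemma evUT_apply (a b : ℂ) (p : PP) :
    evUT a b p = (p.eval (Polynomial.C a)).eval b := rfl

lemma evUT_C (a b : ℂ) (q : Polynomial ℂ) : evUT a b (Polynomial.C q) = q.eval b := by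
  simp [evUT_apply]

lemma evUT_CC (a b z : ℂ) : evUT a b (Polynomial.C (Polynomial.C z)) = z := by
  simp [evUT_apply]

lemma evUT_aeval (a b : ℂ) (f : Polynomial ℂ) :
    evUT a b (Polynomial.aeval xP f) = f.eval (a + b) := by
  rw [Polynomial.aeval_def, Polynomial.hom_eval₂]
  have h1 : (evUT a b).comp (algebraMap ℂ PP) = RingHom.id ℂ := by
    refine RingHom.ext fun z => ?_
    simp [Polynomial.algebraMap_apply, evUT_apply]
  have h2 : evUT a b xP = a + b := by
    simp [xP, evUT_apply]
  rw [h1, h2]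
  rfl
/-- Key vanishing lemma: a weighted-degree-`n` polynomial in `ℂ[t][u]` that has
`n - j + 1` distinct `t`-roots on each line `u = δ j`, `j = 0, …, l`, with the `δ j`
pairwise distinct, vanishes identically on each of these lines. -/
lemma key (n l : ℕ) (hln : l ≤ n) (δ : ℕ → ℂ)
    (hδ : ∀ i, i ≤ l → ∀ j, j ≤ l → i ≠ j → δ i ≠ δ j)
    (R : PP) (hR : Wdeg n R)
    (hroots : ∀ j, j ≤ l → ∃ s : Finset ℂ, n + 1 ≤ s.card + j ∧
      ∀ x ∈ s, (R.eval (Polynomial.C (δ j))).eval x = 0) :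
    ∀ j, j ≤ l → R.eval (Polynomial.C (δ j)) = 0 := by
  have aux : ∀ j, j ≤ l + 1 →
      ∃ Q : PP, R = (∏ i ∈ range j, (Polynomial.X - Polynomial.C (Polynomial.C (δ i)))) * Q ∧
        ∀ k, Q.coeff k ≠ 0 → (Q.coeff k).natDegree + k + j ≤ n := by
    intro j hjl
    induction j with
    | zero => exact ⟨R, by simp, fun k hk => by have := hR k hk; omega⟩
    | succ j ih =>
      obtain ⟨Q, hRQ, hQ⟩ := ih (by omega)
      have hjl' : j ≤ l := by omega
      -- the evaluation of the product of the previous factors at `u = δ j`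
      have hprod : ∀ x : ℂ,
          (∏ i ∈ range j, (Polynomial.X - Polynomial.C (Polynomial.C (δ i)))).eval
            (Polynomial.C (δ j)) = Polynomial.C (∏ i ∈ range j, (δ j - δ i)) := by
        intro _
        rw [Polynomial.eval_prod, map_prod]
        exact Finset.prod_congr rfl fun i _ => by simp
      have hz : (∏ i ∈ range j, (δ j - δ i)) ≠ 0 := by
        rw [Finset.prod_ne_zero_iff]
        intro i hi
        have hij : i ≠ j := by have := Finset.mem_range.mp hi; omega
        exact sub_ne_zero.mpr (Ne.symm (hδ i (by have := Finset.mem_range.mp hi; omega) j hjl' hij))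
      have heval : R.eval (Polynomial.C (δ j)) =
          Polynomial.C (∏ i ∈ range j, (δ j - δ i)) * Q.eval (Polynomial.C (δ j)) := by
        rw [hRQ, Polynomial.eval_mul, hprod 0]
      -- degree bound for `Q.eval (C (δ j))`
      have hdeg : (Q.eval (Polynomial.C (δ j))).natDegree ≤ n - j := by
        rw [Polynomial.eval_eq_sum_range]
        apply Polynomial.natDegree_sum_le_of_forall_le
        intro i _
        rcases eq_or_ne (Q.coeff i) 0 with h | h
        · simp [h]
        have h1 := hQ i h
        have h2 := Polynomial.natDegree_mul_le (p := Q.coeff i) (q := (Polynomial.C (δ j)) ^ i)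
        have h3 : ((Polynomial.C (δ j) : Polynomial ℂ) ^ i).natDegree = 0 := by
          rw [← map_pow, Polynomial.natDegree_C]
        omega
      -- `Q.eval (C (δ j)) = 0` from the root count
      have hQe : Q.eval (Polynomial.C (δ j)) = 0 := by
        obtain ⟨s, hcard, hvan⟩ := hroots j hjl'
        apply Polynomial.eq_zero_of_natDegree_lt_card_of_eval_eq_zero' _ s
        · intro x hx
          have := hvan x hx
          rw [heval, Polynomial.eval_mul, Polynomial.eval_C] at this
          exact (mul_eq_zero.mp this).resolve_left hz
        · omega
      have hRe : R.eval (Polynomial.C (δ j)) = 0 := by rw [heval, hQe, mul_zero]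
      -- divide
      obtain ⟨Q', hQ'⟩ := (Polynomial.dvd_iff_isRoot.mpr hQe : _ ∣ Q)
      refine ⟨Q', ?_, ?_⟩
      · rw [hRQ, hQ', Finset.prod_range_succ, mul_assoc]
      · intro k hk
        have hQ'0 : Q' ≠ 0 := fun h => hk (by simp [h])
        have hfac : (Polynomial.X - Polynomial.C (Polynomial.C (δ j)) : PP) ≠ 0 :=
          Polynomial.X_sub_C_ne_zero _
        have hQ0 : Q ≠ 0 := by rw [hQ']; exact mul_ne_zero hfac hQ'0
        have hnd : Q.natDegree = Q'.natDegree + 1 := by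
          rw [hQ', Polynomial.natDegree_mul hfac hQ'0, Polynomial.natDegree_X_sub_C, add_comm]
        have hQtop : Q.natDegree + j ≤ n := by
          have := hQ Q.natDegree (Polynomial.leadingCoeff_ne_zero.mpr hQ0)
          omega
        -- downward induction on the coefficient index
        have main : ∀ d k, Q'.natDegree < k + d → Q'.coeff k ≠ 0 →
            (Q'.coeff k).natDegree + k + (j + 1) ≤ n := by
          intro d
          induction d with
          | zero =>
            intro k hkd hk
            exact absurd (Polynomial.coeff_eq_zero_of_natDegree_lt (by omega)) hk
          | succ d ihd =>
            intro k hkd hk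
            have hk1 : k + 1 + j ≤ n := by
              have := Polynomial.le_natDegree_of_ne_zero hk
              omega
            have hco : Q.coeff (k+1) = Q'.coeff k - Polynomial.C (δ j) * Q'.coeff (k+1) := by
              rw [hQ', sub_mul, Polynomial.coeff_sub, Polynomial.coeff_X_mul,
                Polynomial.coeff_C_mul]
            have hco' : Q'.coeff k = Q.coeff (k+1) + Polynomial.C (δ j) * Q'.coeff (k+1) := by
              rw [hco]; ring
            have e1 : (Q.coeff (k+1)).natDegree + (k + j + 1) ≤ n := by
              rcases eq_or_ne (Q.coeff (k+1)) 0 with h | h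
              · rw [h]; simp; omega
              · have := hQ (k+1) h; omega
            have e2 : (Polynomial.C (δ j) * Q'.coeff (k+1)).natDegree + (k + j + 1) ≤ n := by
              have hle := Polynomial.natDegree_C_mul_le (δ j) (Q'.coeff (k+1))
              rcases eq_or_ne (Q'.coeff (k+1)) 0 with h | h
              · rw [h, mul_zero]; simp; omega
              · have := ihd (k+1) (by omega) h; omega
            have h3 := Polynomial.natDegree_add_le (Q.coeff (k+1))
              (Polynomial.C (δ j) * Q'.coeff (k+1))
            rw [← hco'] at h3
            rcases max_cases (Q.coeff (k+1)).natDegree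
                (Polynomial.C (δ j) * Q'.coeff (k+1)).natDegree with ⟨he, _⟩ | ⟨he, _⟩ <;>
              rw [he] at h3 <;> omega
        exact main (Q'.natDegree + 1) k (by omega) hk
  intro j hj
  obtain ⟨Q, hRQ, -⟩ := aux (l + 1) le_rfl
  rw [hRQ, Polynomial.eval_mul, Polynomial.eval_prod]
  have : ∏ i ∈ range (l+1), ((Polynomial.X - Polynomial.C (Polynomial.C (δ i))).eval
      (Polynomial.C (δ j))) = 0 := by
    apply Finset.prod_eq_zero (Finset.mem_range.mpr (by omega : j < l + 1))
    simp
  rw [this, zero_mul]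
/-- The bivariate polynomial (in coordinates `u = x - y`, `t = y`) attached to a
coefficient vector `c` on `Λ_{2,n}`. -/
noncomputable def Rpoly (n : ℕ) (c : {x // x ∈ Lam2 n} → ℂ) : PP :=
  ∑ α ∈ (Lam2 n).attach, Polynomial.C (Polynomial.C (c α)) *
    Polynomial.aeval xP (binP α.1.1) * Polynomial.C (binP α.1.2)

lemma Rpoly_wdeg (n : ℕ) (c : {x // x ∈ Lam2 n} → ℂ) : Wdeg n (Rpoly n c) := by
  apply Wdeg.sum
  intro α _
  have hα : (α : ℕ × ℕ).1 + (α : ℕ × ℕ).2 ≤ n := by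
    have h := α.2
    simp only [Lam2, Finset.mem_filter] at h
    exact h.2.2
  have hw : Wdeg (0 + (α : ℕ × ℕ).1 + (α : ℕ × ℕ).2)
      (Polynomial.C (Polynomial.C (c α)) * Polynomial.aeval xP (binP (α : ℕ × ℕ).1) *
        Polynomial.C (binP (α : ℕ × ℕ).2)) :=
    ((Wdeg.CC _).mul (Wdeg.aevalxP (binP_natDegree_le _))).mul (Wdeg.Cpoly (binP_natDegree_le _))
  exact hw.mono (by omega)

lemma Rpoly_eval (n : ℕ) (c : {x // x ∈ Lam2 n} → ℂ) (w : ℕ × ℕ) :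
    evUT ((w.1 : ℂ) - (w.2 : ℂ)) (w.2 : ℂ) (Rpoly n c) =
      ∑ α ∈ (Lam2 n).attach, c α * ((w.1.choose (α : ℕ × ℕ).1 * w.2.choose (α : ℕ × ℕ).2 : ℕ) : ℂ) := by
  rw [Rpoly, map_sum]
  refine Finset.sum_congr rfl fun α _ => ?_
  rw [map_mul, map_mul, evUT_CC, evUT_aeval, evUT_C, sub_add_cancel, binP_eval_nat, binP_eval_nat]
  push_cast
  ring

lemma phi_eval (n : ℕ) (φ : Module.Dual ℂ ({x // x ∈ Lam2 n} → ℂ)) (w : ℕ × ℕ) :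
    φ (vbar n w) = ((Rpoly n (fun α => φ (fun β => if α = β then 1 else 0))).eval
      (Polynomial.C ((w.1 : ℂ) - (w.2 : ℂ)))).eval (w.2 : ℂ) := by
  rw [← evUT_apply, Rpoly_eval]
  conv_lhs => rw [pi_eq_sum_univ (vbar n w), map_sum]
  rw [Finset.univ_eq_attach]
  refine Finset.sum_congr rfl fun α _ => ?_
  rw [map_smul]
  simp only [vbar, smul_eq_mul]
  ring
section Geom

variable {n : ℕ} {η : OmegaData}

lemma tIdx_mem (hη : η.IsOmega n) {j : ℕ} (hjn : j ≤ n) :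
    j ≤ ∑ i ∈ range (tIdx η j + 1), η.d i := by
  have hne : η.r ∈ {t | j ≤ ∑ i ∈ range (t+1), η.d i} := by
    simp only [Set.mem_setOf_eq, hη.2.2.2]
    exact hjn
  exact Nat.sInf_mem (⟨η.r, hne⟩ : Set.Nonempty _)

lemma tIdx_pos (hη : η.IsOmega n) {j : ℕ} (hj1 : 1 ≤ j) (hjn : j ≤ n) : 1 ≤ tIdx η j := by
  by_contra h
  have h0 : tIdx η j = 0 := by omega
  have := tIdx_mem hη hjn
  rw [h0] at this
  simp [hη.1] at this
  omega

lemma tIdx_lt (hη : η.IsOmega n) {j : ℕ} (hj1 : 1 ≤ j) (hjn : j ≤ n) :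
    ∑ i ∈ range (tIdx η j), η.d i < j := by
  have h1 := tIdx_pos hη hj1 hjn
  have hlt : tIdx η j - 1 < tIdx η j := by omega
  have h2 : tIdx η j - 1 ∉ {t | j ≤ ∑ i ∈ range (t+1), η.d i} :=
    Nat.notMem_of_lt_sInf hlt
  simp only [Set.mem_setOf_eq, not_le] at h2
  rwa [Nat.sub_add_cancel h1] at h2

lemma tIdx_mono (hη : η.IsOmega n) {i j : ℕ} (hij : i ≤ j) (hjn : j ≤ n) :
    tIdx η i ≤ tIdx η j :=
  Nat.sInf_le (le_trans hij (tIdx_mem hη hjn))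

/-- The value `a` appearing in `vvec`. -/
noncomputable def Aval (η : OmegaData) (j : ℕ) : ℕ :=
  (∑ i ∈ range (tIdx η j), if (Odd i ↔ Odd (tIdx η j)) then η.d i else 0) +
    (j - ∑ i ∈ range (tIdx η j), η.d i)

lemma vvec_eq (η : OmegaData) (j : ℕ) :
    vvec η j = if (η.z = true) ↔ Odd (tIdx η j) then (Aval η j, 0) else (0, Aval η j) := rfl

lemma Aval_pos (hη : η.IsOmega n) {j : ℕ} (hj1 : 1 ≤ j) (hjn : j ≤ n) : 1 ≤ Aval η j := by
  have := tIdx_lt hη hj1 hjn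
  unfold Aval
  omega

lemma Aval_lt (hη : η.IsOmega n) {i j : ℕ} (h1 : 1 ≤ i) (hij : i < j) (hjn : j ≤ n)
    (hpar : Odd (tIdx η i) ↔ Odd (tIdx η j)) : Aval η i < Aval η j := by
  have hin : i ≤ n := by omega
  have hmono : tIdx η i ≤ tIdx η j := tIdx_mono hη (le_of_lt hij) hjn
  have hsi := tIdx_lt hη h1 hin
  have hsj := tIdx_lt hη (by omega) hjn
  have hmi := tIdx_mem hη hin
  rcases eq_or_lt_of_le hmono with heq | hlt
  · unfold Aval
    rw [← heq]
    omega
  · rw [Finset.sum_range_succ] at hmi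
    have hsub : (∑ i' ∈ range (tIdx η i + 1), if (Odd i' ↔ Odd (tIdx η j)) then η.d i' else 0) ≤
        (∑ i' ∈ range (tIdx η j), if (Odd i' ↔ Odd (tIdx η j)) then η.d i' else 0) :=
      Finset.sum_le_sum_of_subset (Finset.range_subset_range.mpr hlt)
    have hstep : (∑ i' ∈ range (tIdx η i + 1), if (Odd i' ↔ Odd (tIdx η j)) then η.d i' else 0) =
        (∑ i' ∈ range (tIdx η i), if (Odd i' ↔ Odd (tIdx η j)) then η.d i' else 0) +
          η.d (tIdx η i) := by
      rw [Finset.sum_range_succ, if_pos hpar]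
    have hPeq : (∑ i' ∈ range (tIdx η i), if (Odd i' ↔ Odd (tIdx η j)) then η.d i' else 0) =
        (∑ i' ∈ range (tIdx η i), if (Odd i' ↔ Odd (tIdx η i)) then η.d i' else 0) :=
      Finset.sum_congr rfl fun x _ => if_congr (iff_congr Iff.rfl hpar.symm) rfl rfl
    unfold Aval
    omega

lemma vvec_zero (η : OmegaData) : vvec η 0 = (0, 0) := by
  have ht : tIdx η 0 = 0 := Nat.sInf_eq_zero.mpr (Or.inl (by simp))
  rw [vvec_eq]
  unfold Aval
  rw [ht]
  simp

/-- The (complex) difference of the two coordinates of `vvec η j`. -/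
noncomputable def deltaC (η : OmegaData) (j : ℕ) : ℂ :=
  ((vvec η j).1 : ℂ) - ((vvec η j).2 : ℂ)

lemma deltaC_ne (hη : η.IsOmega n) {i j : ℕ} (hij : i < j) (hjn : j ≤ n) (hj1 : 1 ≤ j) :
    deltaC η i ≠ deltaC η j := by
  have hAj := Aval_pos hη hj1 hjn
  have hcast : ∀ a b : ℕ, 1 ≤ a → ((a : ℂ) ≠ -(b : ℂ)) := by
    intro a b ha h
    have : ((a + b : ℕ) : ℂ) = 0 := by push_cast; linear_combination h
    rw [Nat.cast_eq_zero] at this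
    omega
  rcases Nat.eq_zero_or_pos i with rfl | hi1
  · rw [deltaC, deltaC, vvec_zero, vvec_eq]
    by_cases hcj : ((η.z = true) ↔ Odd (tIdx η j))
    · rw [if_pos hcj]
      simp only [Nat.cast_zero, sub_zero, sub_self]
      intro h
      have : (Aval η j : ℂ) = 0 := by linear_combination -h
      rw [Nat.cast_eq_zero] at this
      omega
    · rw [if_neg hcj]
      simp only [Nat.cast_zero, zero_sub, sub_self]
      intro h
      have : (Aval η j : ℂ) = 0 := by
        have := h.symm
        rw [neg_eq_zero] at this
        exact this
      rw [Nat.cast_eq_zero] at this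
      omega
  · have hAi := Aval_pos hη hi1 (by omega)
    rw [deltaC, deltaC, vvec_eq, vvec_eq]
    by_cases hci : ((η.z = true) ↔ Odd (tIdx η i)) <;>
      by_cases hcj : ((η.z = true) ↔ Odd (tIdx η j))
    · rw [if_pos hci, if_pos hcj]
      simp only [Nat.cast_zero, sub_zero]
      have hpar : Odd (tIdx η i) ↔ Odd (tIdx η j) := by tauto
      have hlt := Aval_lt hη hi1 hij hjn hpar
      intro h
      rw [Nat.cast_inj] at h
      omega
    · rw [if_pos hci, if_neg hcj]
      simp only [Nat.cast_zero, sub_zero, zero_sub]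
      exact hcast _ _ hAi
    · rw [if_neg hci, if_pos hcj]
      simp only [Nat.cast_zero, sub_zero, zero_sub]
      intro h
      exact hcast _ _ hAj h.symm
    · rw [if_neg hci, if_neg hcj]
      simp only [Nat.cast_zero, zero_sub]
      have hpar : Odd (tIdx η i) ↔ Odd (tIdx η j) := by tauto
      have hlt := Aval_lt hη hi1 hij hjn hpar
      intro h
      rw [neg_inj, Nat.cast_inj] at h
      omega

lemma deltaC_inj (hη : η.IsOmega n) {l : ℕ} (hln : l ≤ n) :
    ∀ i, i ≤ l → ∀ j, j ≤ l → i ≠ j → deltaC η i ≠ deltaC η j := by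
  intro i hi j hj hij
  rcases lt_or_gt_of_ne hij with h | h
  · exact deltaC_ne hη h (by omega) (by omega)
  · exact (deltaC_ne hη h (by omega) (by omega)).symm

end Geom
lemma vbar_zero (n : ℕ) : vbar n ((0 : ℕ), (0 : ℕ)) = 0 := by
  funext α
  have hα : 1 ≤ (α : ℕ × ℕ).1 + (α : ℕ × ℕ).2 := by
    have h := α.2
    simp only [Lam2, Finset.mem_filter] at h
    exact h.2.1
  rw [vbar]
  rcases Nat.lt_or_ge 0 (α : ℕ × ℕ).1 with h | h
  · simp [Nat.choose_eq_zero_of_lt h]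
  · have h2 : 0 < (α : ℕ × ℕ).2 := by omega
    simp [Nat.choose_eq_zero_of_lt h2]

lemma main_mem (n : ℕ) (hn : 1 ≤ n) (η : OmegaData) (hη : η.IsOmega n)
    (l : ℕ) (hl1 : 1 ≤ l) (hln : l ≤ n) (ρ : ℕ → ℕ) {j : ℕ} (hj : j ≤ l) (p : ℕ) :
    vbar n (vvec η j + (p, p)) ∈ Submodule.span ℂ (vbar n '' ↑(Tj n η 0 ∪
      (Finset.Icc 1 l).biUnion (fun i => (Tj n η i).image (fun v => v + (ρ i, ρ i))))) := by
  set S : Finset (ℕ × ℕ) := Tj n η 0 ∪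
    (Finset.Icc 1 l).biUnion (fun i => (Tj n η i).image (fun v => v + (ρ i, ρ i))) with hS
  rw [← Subspace.forall_mem_dualAnnihilator_apply_eq_zero_iff]
  intro φ hφ
  have hvan : ∀ w ∈ S, φ (vbar n w) = 0 := by
    intro w hw
    exact (Submodule.mem_dualAnnihilator φ).mp hφ _
      (Submodule.subset_span ⟨w, Finset.mem_coe.mpr hw, rfl⟩)
  set c : {x // x ∈ Lam2 n} → ℂ := fun α => φ (fun β => if α = β then 1 else 0) with hc
  have hform : ∀ w : ℕ × ℕ, φ (vbar n w) =
      ((Rpoly n c).eval (Polynomial.C ((w.1 : ℂ) - (w.2 : ℂ)))).eval (w.2 : ℂ) :=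
    fun w => phi_eval n φ w
  have hz : ∀ j', j' ≤ l → (Rpoly n c).eval (Polynomial.C (deltaC η j')) = 0 := by
    apply key n l hln (deltaC η) (deltaC_inj hη hln) (Rpoly n c) (Rpoly_wdeg n c)
    intro j' hj'
    rcases Nat.eq_zero_or_pos j' with rfl | h1
    · refine ⟨(range (n+1)).image (fun q : ℕ => (q : ℂ)), ?_, ?_⟩
      · rw [Finset.card_image_of_injective _ Nat.cast_injective, Finset.card_range]
      · intro x hx
        obtain ⟨q, hq, rfl⟩ := Finset.mem_image.mp hx
        have hδ0 : deltaC η 0 = (q : ℂ) - (q : ℂ) := by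
          rw [deltaC, vvec_zero]; simp
        rw [hδ0, ← hform (q, q)]
        rcases Nat.eq_zero_or_pos q with rfl | hq1
        · rw [show ((0:ℕ), (0:ℕ)) = ((0 : ℕ × ℕ).1, (0 : ℕ × ℕ).2) from rfl]
          rw [show ((0 : ℕ × ℕ).1, (0 : ℕ × ℕ).2) = (0 : ℕ × ℕ) from rfl]
          rw [show (0 : ℕ × ℕ) = ((0:ℕ), (0:ℕ)) from rfl, vbar_zero, map_zero]
        · apply hvan
          apply Finset.mem_union_left
          rw [Tj, if_pos rfl]
          refine Finset.mem_image.mpr ⟨q - 1, Finset.mem_range.mpr (by have := Finset.mem_range.mp hq; omega), ?_⟩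
          have : q - 1 + 1 = q := by omega
          rw [this]
    · refine ⟨(range (n - j' + 1)).image
          (fun p' => (((vvec η j').2 + ρ j' + p' : ℕ) : ℂ)), ?_, ?_⟩
      · have hinj : Function.Injective (fun p' : ℕ => (((vvec η j').2 + ρ j' + p' : ℕ) : ℂ)) := by
          intro a b hab
          simp only [Nat.cast_inj] at hab
          omega
        rw [Finset.card_image_of_injective _ hinj, Finset.card_range]
        omega
      · intro x hx
        obtain ⟨p', hp', rfl⟩ := Finset.mem_image.mp hx
        set w : ℕ × ℕ := vvec η j' + (ρ j' + p', ρ j' + p') with hw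
        have hw2 : (((vvec η j').2 + ρ j' + p' : ℕ) : ℂ) = (w.2 : ℂ) := by
          rw [hw]; simp only [Prod.snd_add]; push_cast; ring
        have hwd : deltaC η j' = ((w.1 : ℂ) - (w.2 : ℂ)) := by
          rw [deltaC, hw]; simp only [Prod.fst_add, Prod.snd_add]; push_cast; ring
        rw [hw2, hwd, ← hform w]
        apply hvan
        apply Finset.mem_union_right
        refine Finset.mem_biUnion.mpr ⟨j', Finset.mem_Icc.mpr ⟨h1, hj'⟩, ?_⟩
        refine Finset.mem_image.mpr ⟨vvec η j' + (p', p'), ?_, ?_⟩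
        · rw [Tj, if_neg (by omega)]
          exact Finset.mem_image.mpr ⟨p', hp', rfl⟩
        · rw [hw]
          ext <;> simp <;> ring
  rw [hform]
  have hwd : deltaC η j = (((vvec η j + (p, p)).1 : ℂ) - ((vvec η j + (p, p)).2 : ℂ)) := by
    rw [deltaC]; simp only [Prod.fst_add, Prod.snd_add]; push_cast; ring
  rw [← hwd, hz j hj]
  simp

lemma gen_form (n : ℕ) (η : OmegaData) (l : ℕ) (ρ : ℕ → ℕ) {w : ℕ × ℕ}
    (hw : w ∈ Tj n η 0 ∪ (Finset.Icc 1 l).biUnion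
      (fun i => (Tj n η i).image (fun v => v + (ρ i, ρ i)))) :
    ∃ j, j ≤ l ∧ ∃ p, w = vvec η j + (p, p) := by
  rcases Finset.mem_union.mp hw with h | h
  · rw [Tj, if_pos rfl] at h
    obtain ⟨q, _, rfl⟩ := Finset.mem_image.mp h
    exact ⟨0, Nat.zero_le l, q + 1, by rw [vvec_zero]; ext <;> simp⟩
  · obtain ⟨i, hi, hmem⟩ := Finset.mem_biUnion.mp h
    have hi' := Finset.mem_Icc.mp hi
    obtain ⟨v, hv, rfl⟩ := Finset.mem_image.mp hmem
    rw [Tj, if_neg (by omega)] at hv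
    obtain ⟨p, _, rfl⟩ := Finset.mem_image.mp hv
    exact ⟨i, hi'.2, p + ρ i, by ext <;> simp <;> ring⟩
lemma Tset_eq (n : ℕ) (η : OmegaData) (l : ℕ) :
    (range (l+1)).biUnion (fun i => Tj n η i) = Tj n η 0 ∪
      (Finset.Icc 1 l).biUnion (fun i => (Tj n η i).image (fun v => v + ((0:ℕ), (0:ℕ)))) := by
  have himg : ∀ i, (Tj n η i).image (fun v => v + ((0:ℕ), (0:ℕ))) = Tj n η i := by
    intro i
    have : (fun v : ℕ × ℕ => v + ((0:ℕ), (0:ℕ))) = id := by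
      funext v; ext <;> simp
    rw [this, Finset.image_id]
  ext w
  simp only [Finset.mem_biUnion, Finset.mem_union, Finset.mem_range, Finset.mem_Icc, himg]
  constructor
  · rintro ⟨i, hi, hw⟩
    rcases Nat.eq_zero_or_pos i with rfl | h1
    · exact Or.inl hw
    · exact Or.inr ⟨i, ⟨h1, by omega⟩, hw⟩
  · rintro (hw | ⟨i, ⟨h1, h2⟩, hw⟩)
    · exact ⟨0, by omega, hw⟩
    · exact ⟨i, by omega, hw⟩

theorem stmt2 (n : ℕ) (hn : 1 ≤ n) (η : OmegaData) (hη : η.IsOmega n)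
    (l : ℕ) (hl1 : 1 ≤ l) (hln : l ≤ n) (rr : ℕ → ℕ) :
    Submodule.span ℂ (vbar n '' ↑(Tj n η 0 ∪ (Finset.Icc 1 l).biUnion
        (fun i => (Tj n η i).image (fun v => v + (rr i, rr i))))) =
      Submodule.span ℂ (vbar n '' ↑((range (l+1)).biUnion (fun i => Tj n η i))) ∧
    ∀ r : ℕ, vbar n (vvec η l + (r, r)) ∈
      Submodule.span ℂ (vbar n '' ↑((range (l+1)).biUnion (fun i => Tj n η i))) := by
  have hTeq := Tset_eq n η l
  constructor
  · apply le_antisymm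
    · rw [Submodule.span_le]
      rintro x ⟨w, hw, rfl⟩
      obtain ⟨j, hj, p, rfl⟩ := gen_form n η l rr (Finset.mem_coe.mp hw)
      rw [SetLike.mem_coe, hTeq]
      exact main_mem n hn η hη l hl1 hln (fun _ => 0) hj p
    · rw [Submodule.span_le]
      rintro x ⟨w, hw, rfl⟩
      rw [Finset.mem_coe, hTeq] at hw
      obtain ⟨j, hj, p, rfl⟩ := gen_form n η l (fun _ => 0) hw
      rw [SetLike.mem_coe]
      exact main_mem n hn η hη l hl1 hln rr hj p
  · intro r
    rw [hTeq]
    exact main_mem n hn η hη l hl1 hln (fun _ => 0) le_rfl r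
end

section
/- For every k ∈ {1,…,n} there exists η ∈ Ω with η ≠ η_k such that f_k(m_{J_η}) = f_k(m_{J_{η_k}}). -/
open Finset

namespace S6

variable (n k : ℕ)

/-- the smaller weight -/
def pp : ℕ := if zk n k then k else n + 1 - k
/-- the larger weight -/
def qq : ℕ := if zk n k then n + 1 - k else k

section basic
variable {n k} (hn : 1 ≤ n) (hk1 : 1 ≤ k) (hkn : k ≤ n)

lemma zk_iff : zk n k = true ↔ 2 * k ≤ n + 1 := by
  unfold zk fk
  simp only [decide_eq_true_eq]
  push_cast
  constructor <;> intro h <;> nlinarith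

include hkn in
lemma pq_sum : pp n k + qq n k = n + 1 := by
  unfold pp qq; split <;> omega

include hk1 hkn in
lemma pp_pos : 1 ≤ pp n k := by unfold pp; split <;> omega

include hk1 hkn in
lemma qq_pos : 1 ≤ qq n k := by unfold qq; split <;> omega

include hk1 hkn in
lemma pp_le_qq : pp n k ≤ qq n k := by
  have h := zk_iff (n := n) (k := k)
  unfold pp qq
  rcases Bool.eq_false_or_eq_true (zk n k) with hz | hz <;> simp [hz] at h ⊢ <;> omega

include hk1 hkn in
lemma qq_le_n : qq n k ≤ n := by
  have h := zk_iff (n := n) (k := k)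
  unfold qq
  rcases Bool.eq_false_or_eq_true (zk n k) with hz | hz <;> simp [hz] at h ⊢ <;> omega

lemma sSup_aux (b c : ℕ) (hc : 0 < c) : sSup {m : ℕ | (m:ℤ) * c ≤ (b:ℤ)} = b / c := by
  have : {m : ℕ | (m:ℤ) * c ≤ (b:ℤ)} = Set.Iic (b / c) := by
    ext m
    simp only [Set.mem_setOf_eq, Set.mem_Iic, Nat.le_div_iff_mul_le hc]
    exact_mod_cast Iff.rfl
  rw [this, csSup_Iic]

include hk1 hkn in
lemma tval_eq (l O E : ℕ) :
    tval n k l O E = if Odd l then ((E+1) * qq n k) / pp n k else ((O+1) * pp n k) / qq n k := by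
  have hfk1 : fk k (1, 0) = ((k:ℕ) : ℤ) := by unfold fk; push_cast; ring
  have hfk2 : fk k ((n:ℕ), n+1) = ((n + 1 - k : ℕ) : ℤ) := by
    unfold fk; push_cast [Nat.cast_sub (by omega : k ≤ n + 1)]; ring
  have hfkA : ∀ w : ℕ, fk k (w * n, w * (n+1)) = ((w * (n + 1 - k) : ℕ) : ℤ) := by
    intro w; unfold fk; push_cast [Nat.cast_sub (by omega : k ≤ n + 1)]; ring
  have hfkB : ∀ w : ℕ, fk k (w, 0) = ((w * k : ℕ) : ℤ) := by
    intro w; unfold fk; push_cast; ring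
  have hkpos : (0:ℕ) < k := hk1
  have hk'pos : (0:ℕ) < n + 1 - k := by omega
  unfold tval pp qq
  cases hbz : zk n k <;> by_cases hl : Odd l <;>
    simp only [hbz, hl, Bool.false_eq_true, iff_true, iff_false, if_true, if_false,
      not_true, not_false_iff, if_pos, if_neg, not_false_eq_true]
  · rw [hfk2, hfkB]; exact sSup_aux _ _ hk'pos
  · rw [hfk1, hfkA]; exact sSup_aux _ _ hkpos
  · rw [hfk1, hfkA]; exact sSup_aux _ _ hkpos
  · rw [hfk2, hfkB]; exact sSup_aux _ _ hk'pos

end basic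
end S6

namespace S6
section greedy
variable {n k : ℕ} (hn : 1 ≤ n) (hk1 : 1 ≤ k) (hkn : k ≤ n)

lemma oeSums_zero : oeSums n k 0 = (0, 0) := rfl

lemma oeSums_succ (l : ℕ) :
    oeSums n k (l+1) =
      (if Odd (l+1) then ((oeSums n k l).1 + dk n k (l+1), (oeSums n k l).2)
       else ((oeSums n k l).1, (oeSums n k l).2 + dk n k (l+1))) := by
  show (let p := oeSums n k l; _) = _
  simp only [oeSums, dk]

lemma dk_succ (l : ℕ) :
    dk n k (l+1) =
      if (oeSums n k l).1 + (oeSums n k l).2 < n then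
        min (n - ((oeSums n k l).1 + (oeSums n k l).2))
          (tval n k (l+1) (oeSums n k l).1 (oeSums n k l).2 -
            (if Odd (l+1) then (oeSums n k l).1 else (oeSums n k l).2))
      else 0 := rfl

include hn hk1 hkn in
lemma inv_all (l : ℕ) :
    (oeSums n k l).1 + (oeSums n k l).2 ≤ n ∧
    ((oeSums n k l).1 + (oeSums n k l).2 < n →
      (Odd l → (oeSums n k l).2 + 2 ≤ pp n k ∧
        (oeSums n k l).1 = ((oeSums n k l).2 + 1) * qq n k / pp n k) ∧
      (¬ Odd l → ((oeSums n k l).1 = 0 ∧ (oeSums n k l).2 = 0) ∨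
        ((oeSums n k l).1 + 2 ≤ qq n k ∧
          (oeSums n k l).2 = ((oeSums n k l).1 + 1) * pp n k / qq n k))) := by
  have hp : 1 ≤ pp n k := pp_pos hk1 hkn
  have hq : 1 ≤ qq n k := qq_pos hk1 hkn
  have hpq : pp n k ≤ qq n k := pp_le_qq hk1 hkn
  have hsum : pp n k + qq n k = n + 1 := pq_sum hkn
  induction l with
  | zero =>
    constructor
    · simp [oeSums_zero]
    · intro _
      constructor
      · intro h; exact absurd h (by decide)
      · intro _; left; simp [oeSums_zero]
  | succ l ih =>
    obtain ⟨ihS, ihP⟩ := ih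
    by_cases hlt : (oeSums n k l).1 + (oeSums n k l).2 < n
    · have hd := dk_succ (n := n) (k := k) l
      rw [if_pos hlt, tval_eq hk1 hkn] at hd
      have hrec := oeSums_succ (n := n) (k := k) l
      obtain ⟨ih1, ih2⟩ := ihP hlt
      by_cases hodd : Odd (l+1)
      · -- odd step
        have hle : ¬ Odd l := by
          rcases Nat.even_or_odd l with he | ho
          · exact (Nat.not_odd_iff_even).mpr he
          · exact absurd hodd (by simp [Nat.odd_add_one, ho])
        rw [if_pos hodd] at hrec
        rw [if_pos hodd, if_pos hodd] at hd
        have hO' : (oeSums n k (l+1)).1 = (oeSums n k l).1 + dk n k (l+1) := by rw [hrec]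
        have hE' : (oeSums n k (l+1)).2 = (oeSums n k l).2 := by rw [hrec]
        set D := dk n k (l+1) with hD
        set O := (oeSums n k l).1 with hOv
        set E := (oeSums n k l).2 with hEv
        set t := (E + 1) * qq n k / pp n k with ht
        -- t ≥ O + 1
        have htO : O + 1 ≤ t := by
          rcases ih2 hle with ⟨h1, h2⟩ | ⟨h1, h2⟩
          · rw [Nat.le_div_iff_mul_le hp, h1, h2]; simpa using hpq
          · have hmax : (O + 1) * pp n k ≤ (E + 1) * qq n k := by
              have h3 : (O + 1) * pp n k / qq n k < E + 1 := by omega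
              have := (Nat.div_lt_iff_lt_mul hq).mp h3
              omega
            rw [Nat.le_div_iff_mul_le hp]; exact hmax
        have hdle : D ≤ n - (O + E) := by rw [hd]; omega
        refine ⟨by omega, ?_⟩
        intro hlt2
        rw [hO', hE'] at hlt2
        have hdlt : D < n - (O + E) := by omega
        have hdeq : D = t - O := by omega
        have htlt : t < n - E := by omega
        have hcap : (E + 1) * qq n k < (n - E) * pp n k := (Nat.div_lt_iff_lt_mul hp).mp htlt
        have hEp : E + 2 ≤ pp n k := by
          by_contra hc
          push_neg at hc
          have h2 : pp n k * qq n k ≤ (E + 1) * qq n k :=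
            Nat.mul_le_mul_right _ (by omega)
          have h4 : (n - E) * pp n k ≤ qq n k * pp n k :=
            Nat.mul_le_mul_right _ (by omega)
          have := Nat.mul_comm (qq n k) (pp n k)
          omega
        refine ⟨fun _ => ⟨by rw [hE']; omega, by rw [hO', hE']; omega⟩, fun hne => absurd hodd hne⟩
      · -- even step
        have hle : Odd l := by
          rcases Nat.even_or_odd l with he | ho
          · exact absurd (by simp [Nat.odd_add_one, Nat.not_odd_iff_even.mpr he]) hodd
          · exact ho
        rw [if_neg hodd] at hrec
        rw [if_neg hodd, if_neg hodd] at hd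
        have hO' : (oeSums n k (l+1)).1 = (oeSums n k l).1 := by rw [hrec]
        have hE' : (oeSums n k (l+1)).2 = (oeSums n k l).2 + dk n k (l+1) := by rw [hrec]
        set D := dk n k (l+1) with hD
        set O := (oeSums n k l).1 with hOv
        set E := (oeSums n k l).2 with hEv
        set t := (O + 1) * pp n k / qq n k with ht
        obtain ⟨ih1a, ih1b⟩ := ih1 hle
        have htE : E + 1 ≤ t := by
          have hmax : (E + 1) * qq n k ≤ (O + 1) * pp n k := by
            have h3 : (E + 1) * qq n k / pp n k < E + 1 + (O - E) := by omega
            have h4 : (E + 1) * qq n k / pp n k < O + 1 := by omega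
            have := (Nat.div_lt_iff_lt_mul hp).mp h4
            omega
          rw [Nat.le_div_iff_mul_le hq]; exact hmax
        have hdle : D ≤ n - (O + E) := by rw [hd]; omega
        refine ⟨by omega, ?_⟩
        intro hlt2
        rw [hO', hE'] at hlt2
        have hdlt : D < n - (O + E) := by omega
        have hdeq : D = t - E := by omega
        have htlt : t < n - O := by omega
        have hcap : (O + 1) * pp n k < (n - O) * qq n k := (Nat.div_lt_iff_lt_mul hq).mp htlt
        have hOq : O + 2 ≤ qq n k := by
          by_contra hc
          push_neg at hc
          have h2 : qq n k * pp n k ≤ (O + 1) * pp n k :=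
            Nat.mul_le_mul_right _ (by omega)
          have h4 : (n - O) * qq n k ≤ pp n k * qq n k :=
            Nat.mul_le_mul_right _ (by omega)
          have := Nat.mul_comm (qq n k) (pp n k)
          omega
        refine ⟨fun hco => absurd hco hodd, fun _ => Or.inr ⟨by rw [hO']; omega, by rw [hO', hE']; omega⟩⟩
    · -- already terminated: no change
      have hd : dk n k (l+1) = 0 := by rw [dk_succ, if_neg hlt]
      have hrec := oeSums_succ (n := n) (k := k) l
      rw [hd] at hrec
      have heq : oeSums n k (l+1) = oeSums n k l := by
        rw [hrec]; split <;> simp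
      rw [heq]
      exact ⟨ihS, fun h => absurd h hlt⟩

lemma dk_zero : dk n k 0 = 0 := rfl

lemma S_oe (l : ℕ) :
    (oeSums n k l).1 + (oeSums n k l).2 = ∑ i ∈ range (l+1), dk n k i := by
  induction l with
  | zero => simp [oeSums_zero, dk_zero]
  | succ l ih =>
    rw [Finset.sum_range_succ, ← ih, oeSums_succ]
    split <;> simp <;> omega

include hn hk1 hkn in
lemma dk_succ_pos (l : ℕ) (h : (oeSums n k l).1 + (oeSums n k l).2 < n) :
    1 ≤ dk n k (l+1) := by
  have hp : 1 ≤ pp n k := pp_pos hk1 hkn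
  have hq : 1 ≤ qq n k := qq_pos hk1 hkn
  have hpq : pp n k ≤ qq n k := pp_le_qq hk1 hkn
  have hd := dk_succ (n := n) (k := k) l
  rw [if_pos h, tval_eq hk1 hkn] at hd
  obtain ⟨_, ihP⟩ := inv_all hn hk1 hkn (n := n) (k := k) l
  obtain ⟨ih1, ih2⟩ := ihP h
  by_cases hodd : Odd (l+1)
  · have hle : ¬ Odd l := by
      rcases Nat.even_or_odd l with he | ho
      · exact Nat.not_odd_iff_even.mpr he
      · exact absurd hodd (by simp [Nat.odd_add_one, ho])
    rw [if_pos hodd, if_pos hodd] at hd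
    set O := (oeSums n k l).1
    set E := (oeSums n k l).2
    have htO : O + 1 ≤ (E + 1) * qq n k / pp n k := by
      rcases ih2 hle with ⟨h1, h2⟩ | ⟨h1, h2⟩
      · rw [Nat.le_div_iff_mul_le hp, h1, h2]; simpa using hpq
      · have hmax : (O + 1) * pp n k ≤ (E + 1) * qq n k := by
          have h3 : (O + 1) * pp n k / qq n k < E + 1 := by omega
          have := (Nat.div_lt_iff_lt_mul hq).mp h3
          omega
        rw [Nat.le_div_iff_mul_le hp]; exact hmax
    omega
  · have hle : Odd l := by
      rcases Nat.even_or_odd l with he | ho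
      · exact absurd (by simp [Nat.odd_add_one, Nat.not_odd_iff_even.mpr he]) hodd
      · exact ho
    rw [if_neg hodd, if_neg hodd] at hd
    set O := (oeSums n k l).1
    set E := (oeSums n k l).2
    obtain ⟨ih1a, ih1b⟩ := ih1 hle
    have htE : E + 1 ≤ (O + 1) * pp n k / qq n k := by
      have hmax : (E + 1) * qq n k ≤ (O + 1) * pp n k := by
        have h4 : (E + 1) * qq n k / pp n k < O + 1 := by omega
        have := (Nat.div_lt_iff_lt_mul hp).mp h4
        omega
      rw [Nat.le_div_iff_mul_le hq]; exact hmax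
    omega

include hn hk1 hkn in
lemma S_reaches : (oeSums n k n).1 + (oeSums n k n).2 = n := by
  have key : ∀ l, (oeSums n k l).1 + (oeSums n k l).2 < n →
      l ≤ (oeSums n k l).1 + (oeSums n k l).2 := by
    intro l
    induction l with
    | zero => intro _; omega
    | succ l ih =>
      intro h
      have hmono : (oeSums n k l).1 + (oeSums n k l).2 ≤
          (oeSums n k (l+1)).1 + (oeSums n k (l+1)).2 := by
        rw [oeSums_succ]; split <;> simp <;> omega
      have hlt : (oeSums n k l).1 + (oeSums n k l).2 < n := lt_of_le_of_lt hmono h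
      have hpos := dk_succ_pos hn hk1 hkn (n := n) (k := k) l hlt
      have hstep : (oeSums n k (l+1)).1 + (oeSums n k (l+1)).2 =
          (oeSums n k l).1 + (oeSums n k l).2 + dk n k (l+1) := by
        rw [oeSums_succ]; split <;> simp <;> omega
      have := ih hlt
      omega
  have hle := (inv_all hn hk1 hkn (n := n) (k := k) n).1
  by_contra hne
  have hlt : (oeSums n k n).1 + (oeSums n k n).2 < n := by omega
  have := key n hlt
  omega

include hn hk1 hkn in
lemma S_mono {a b : ℕ} (hab : a ≤ b) :
    (oeSums n k a).1 + (oeSums n k a).2 ≤ (oeSums n k b).1 + (oeSums n k b).2 := by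
  induction b with
  | zero => simp_all
  | succ b ih =>
    rcases Nat.lt_or_ge a (b+1) with h | h
    · have := ih (by omega)
      have hmono : (oeSums n k b).1 + (oeSums n k b).2 ≤
          (oeSums n k (b+1)).1 + (oeSums n k (b+1)).2 := by
        rw [oeSums_succ]; split <;> simp <;> omega
      omega
    · have : a = b + 1 := by omega
      subst this; rfl

variable (n k) in
/-- The first index where the partial sum reaches `n`. -/
noncomputable def rP : ℕ := sInf {r | ∑ j ∈ range (r+1), dk n k j = n}

variable (n k) in
lemma rP_spec (hn : 1 ≤ n) (hk1 : 1 ≤ k) (hkn : k ≤ n) :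
    1 ≤ rP n k ∧ rP n k ≤ n ∧
    (oeSums n k (rP n k)).1 + (oeSums n k (rP n k)).2 = n ∧
    (∀ l < rP n k, (oeSums n k l).1 + (oeSums n k l).2 < n) := by
  have hne : (oeSums n k n).1 + (oeSums n k n).2 = n := S_reaches hn hk1 hkn
  have hnemp : n ∈ {r | ∑ j ∈ range (r+1), dk n k j = n} := by
    simp only [Set.mem_setOf_eq, ← S_oe]; exact hne
  have hmem := Nat.sInf_mem (Set.nonempty_of_mem hnemp)
  have hle : rP n k ≤ n := Nat.sInf_le hnemp
  have hSr : (oeSums n k (rP n k)).1 + (oeSums n k (rP n k)).2 = n := by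
    rw [S_oe]; exact hmem
  have hmin : ∀ l < rP n k, (oeSums n k l).1 + (oeSums n k l).2 < n := by
    intro l hl
    have h1 : l ∉ {r | ∑ j ∈ range (r+1), dk n k j = n} := Nat.notMem_of_lt_sInf hl
    simp only [Set.mem_setOf_eq, ← S_oe] at h1
    have := (inv_all hn hk1 hkn (n := n) (k := k) l).1
    omega
  have h1 : 1 ≤ rP n k := by
    by_contra h
    have : rP n k = 0 := by omega
    rw [this] at hSr
    simp [oeSums_zero] at hSr
    omega
  exact ⟨h1, hle, hSr, hmin⟩

include hn hk1 hkn in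
lemma dk_pos_le (l : ℕ) (h1 : 1 ≤ l) (h2 : l ≤ rP n k) : 1 ≤ dk n k l := by
  obtain ⟨_, _, _, hmin⟩ := rP_spec n k hn hk1 hkn
  obtain ⟨l, rfl⟩ : ∃ m, l = m + 1 := ⟨l - 1, by omega⟩
  exact dk_succ_pos hn hk1 hkn _ (hmin l (by omega))

include hn hk1 hkn in
lemma dk_eq_zero_gt (l : ℕ) (h : rP n k < l) : dk n k l = 0 := by
  obtain ⟨_, _, hSr, _⟩ := rP_spec n k hn hk1 hkn
  obtain ⟨l, rfl⟩ : ∃ m, l = m + 1 := ⟨l - 1, by omega⟩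
  have hmono := S_mono hn hk1 hkn (n := n) (k := k) (a := rP n k) (b := l) (by omega)
  have hub := (inv_all hn hk1 hkn (n := n) (k := k) l).1
  rw [dk_succ, if_neg (by omega)]

include hn hk1 hkn in
/-- Final-step facts: at `l = rP`, exact boundary values and last step at least 2 when n ≥ 2. -/
lemma final_facts (hn2 : 2 ≤ n) :
    (Odd (rP n k) → (oeSums n k (rP n k)).1 = qq n k ∧
      (oeSums n k (rP n k)).2 + 1 = pp n k) ∧
    (¬ Odd (rP n k) → (oeSums n k (rP n k)).1 + 1 = qq n k ∧
      (oeSums n k (rP n k)).2 = pp n k) ∧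
    2 ≤ dk n k (rP n k) := by
  have hp : 1 ≤ pp n k := pp_pos hk1 hkn
  have hq : 1 ≤ qq n k := qq_pos hk1 hkn
  have hpq : pp n k ≤ qq n k := pp_le_qq hk1 hkn
  have hsum : pp n k + qq n k = n + 1 := pq_sum hkn
  have hq2 : 2 ≤ qq n k := by omega
  obtain ⟨hr1, hrn, hSr, hmin⟩ := rP_spec n k hn hk1 hkn
  obtain ⟨l, hl⟩ : ∃ m, rP n k = m + 1 := ⟨rP n k - 1, by omega⟩
  rw [hl] at hSr ⊢
  have hSl : (oeSums n k l).1 + (oeSums n k l).2 < n := hmin l (by omega)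
  have hd := dk_succ (n := n) (k := k) l
  rw [if_pos hSl, tval_eq hk1 hkn] at hd
  have hrec := oeSums_succ (n := n) (k := k) l
  obtain ⟨_, ihP⟩ := inv_all hn hk1 hkn (n := n) (k := k) l
  obtain ⟨ih1, ih2⟩ := ihP hSl
  by_cases hodd : Odd (l+1)
  · have hle : ¬ Odd l := by
      rcases Nat.even_or_odd l with he | ho
      · exact Nat.not_odd_iff_even.mpr he
      · exact absurd hodd (by simp [Nat.odd_add_one, ho])
    rw [if_pos hodd] at hrec
    rw [if_pos hodd, if_pos hodd] at hd
    have hO' : (oeSums n k (l+1)).1 = (oeSums n k l).1 + dk n k (l+1) := by rw [hrec]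
    have hE' : (oeSums n k (l+1)).2 = (oeSums n k l).2 := by rw [hrec]
    set D := dk n k (l+1) with hD
    set O := (oeSums n k l).1 with hOv
    set E := (oeSums n k l).2 with hEv
    set t := (E + 1) * qq n k / pp n k with ht
    -- D = n - S and cap binds
    have hDeq : D = n - (O + E) := by omega
    have htcap : n - E ≤ t := by omega
    have hcap : (n - E) * pp n k ≤ (E + 1) * qq n k := by
      rw [← Nat.le_div_iff_mul_le hp]; exact htcap
    -- E ≥ pp - 1
    have hElow : pp n k ≤ E + 1 := by
      by_contra hc
      push_neg at hc
      have h3 : qq n k + 1 ≤ n - E := by omega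
      have h4 : (qq n k + 1) * pp n k ≤ (n - E) * pp n k := Nat.mul_le_mul_right _ h3
      have h5 : (E + 1) * qq n k ≤ (pp n k - 1) * qq n k := Nat.mul_le_mul_right _ (by omega)
      have h6 : (pp n k - 1) * qq n k = pp n k * qq n k - qq n k := by
        rw [Nat.sub_one_mul]
      have h6b : qq n k ≤ pp n k * qq n k := Nat.le_mul_of_pos_left _ (by omega)
      have h7 : (qq n k + 1) * pp n k = qq n k * pp n k + pp n k := by ring
      have := Nat.mul_comm (qq n k) (pp n k)
      omega
    -- E ≤ pp - 1
    have hEhigh : E + 1 ≤ pp n k := by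
      rcases ih2 hle with ⟨h1, h2⟩ | ⟨h1, h2⟩
      · omega
      · have h3 : E ≤ (qq n k - 1) * pp n k / qq n k := by
          rw [h2]; exact Nat.div_le_div_right (Nat.mul_le_mul_right _ (by omega))
        have h4 : (qq n k - 1) * pp n k / qq n k < pp n k := by
          rw [Nat.div_lt_iff_lt_mul hq]
          calc (qq n k - 1) * pp n k < qq n k * pp n k :=
            (Nat.mul_lt_mul_right (by omega : 0 < pp n k)).mpr (by omega)
          _ = pp n k * qq n k := Nat.mul_comm _ _
        omega
    have hOfin : O ≤ qq n k - 2 := by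
      rcases ih2 hle with ⟨h1, h2⟩ | ⟨h1, h2⟩ <;> omega
    refine ⟨fun _ => ⟨by omega, by omega⟩, fun hne => absurd hodd hne, by omega⟩
  · have hle : Odd l := by
      rcases Nat.even_or_odd l with he | ho
      · exact absurd (by simp [Nat.odd_add_one, Nat.not_odd_iff_even.mpr he]) hodd
      · exact ho
    rw [if_neg hodd] at hrec
    rw [if_neg hodd, if_neg hodd] at hd
    have hO' : (oeSums n k (l+1)).1 = (oeSums n k l).1 := by rw [hrec]
    have hE' : (oeSums n k (l+1)).2 = (oeSums n k l).2 + dk n k (l+1) := by rw [hrec]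
    set D := dk n k (l+1) with hD
    set O := (oeSums n k l).1 with hOv
    set E := (oeSums n k l).2 with hEv
    set t := (O + 1) * pp n k / qq n k with ht
    obtain ⟨ih1a, ih1b⟩ := ih1 hle
    have hDeq : D = n - (O + E) := by omega
    have htcap : n - O ≤ t := by omega
    have hcap : (n - O) * qq n k ≤ (O + 1) * pp n k := by
      rw [← Nat.le_div_iff_mul_le hq]; exact htcap
    have hOlow : qq n k ≤ O + 1 := by
      by_contra hc
      push_neg at hc
      have h3 : pp n k + 1 ≤ n - O := by omega
      have h4 : (pp n k + 1) * qq n k ≤ (n - O) * qq n k := Nat.mul_le_mul_right _ h3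
      have h5 : (O + 1) * pp n k ≤ (qq n k - 1) * pp n k := Nat.mul_le_mul_right _ (by omega)
      have h6 : (qq n k - 1) * pp n k = qq n k * pp n k - pp n k := by
        rw [Nat.sub_one_mul]
      have h6b : pp n k ≤ qq n k * pp n k := Nat.le_mul_of_pos_left _ (by omega)
      have h7 : (pp n k + 1) * qq n k = pp n k * qq n k + qq n k := by ring
      have := Nat.mul_comm (qq n k) (pp n k)
      omega
    have hOhigh : O + 1 ≤ qq n k := by
      have h3 : O ≤ (pp n k - 1) * qq n k / pp n k := by
        rw [ih1b]; exact Nat.div_le_div_right (Nat.mul_le_mul_right _ (by omega))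
      have h4 : (pp n k - 1) * qq n k / pp n k < qq n k := by
        rw [Nat.div_lt_iff_lt_mul hp]
        calc (pp n k - 1) * qq n k < pp n k * qq n k :=
          (Nat.mul_lt_mul_right (by omega : 0 < qq n k)).mpr (by omega)
        _ = qq n k * pp n k := Nat.mul_comm _ _
      omega
    refine ⟨fun hco => absurd hco hodd, fun _ => ⟨by omega, by omega⟩, by omega⟩

lemma oe_parity_sums (l : ℕ) :
    (oeSums n k l).1 = (∑ i ∈ range (l+1), if Odd i then dk n k i else 0) ∧
    (oeSums n k l).2 = (∑ i ∈ range (l+1), if ¬ Odd i then dk n k i else 0) := by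
  induction l with
  | zero => simp [oeSums_zero, dk_zero]
  | succ l ih =>
    obtain ⟨ih1, ih2⟩ := ih
    constructor
    · rw [Finset.sum_range_succ (n := l+1), ← ih1, oeSums_succ]
      by_cases hodd : Odd (l+1)
      · rw [if_pos hodd, if_pos hodd]
      · rw [if_neg hodd, if_neg hodd]
        simp
    · rw [Finset.sum_range_succ (n := l+1), ← ih2, oeSums_succ]
      by_cases hodd : Odd (l+1)
      · rw [if_pos hodd, if_neg (by simp [hodd])]
        simp
      · rw [if_neg hodd, if_pos hodd]

end greedy
end S6

namespace S6

/-- Characterization of `tIdx`. -/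
lemma tIdx_eq_of (η : OmegaData) {j t : ℕ}
    (h1 : ∑ i ∈ range t, η.d i < j) (h2 : j ≤ ∑ i ∈ range (t+1), η.d i) :
    tIdx η j = t := by
  have hmem : t ∈ {t | j ≤ ∑ i ∈ range (t+1), η.d i} := h2
  have hle : tIdx η j ≤ t := Nat.sInf_le hmem
  rcases Nat.lt_or_ge (tIdx η j) t with hlt | hge
  · exfalso
    have hmem2 := Nat.sInf_mem (Set.nonempty_of_mem hmem)
    have hmono : ∑ i ∈ range (tIdx η j + 1), η.d i ≤ ∑ i ∈ range t, η.d i := by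
      apply Finset.sum_le_sum_of_subset
      apply Finset.range_subset_range.mpr
      omega
    have : j ≤ ∑ i ∈ range (tIdx η j + 1), η.d i := hmem2
    omega
  · omega

lemma vvec_spec (η : OmegaData) {j t : ℕ} (htid : tIdx η j = t) :
    vvec η j =
      if (η.z = true) ↔ Odd t then
        ((∑ i ∈ range t, if (Odd i ↔ Odd t) then η.d i else 0) +
          (j - ∑ i ∈ range t, η.d i), 0)
      else
        (0, (∑ i ∈ range t, if (Odd i ↔ Odd t) then η.d i else 0) +
          (j - ∑ i ∈ range t, η.d i)) := by
  simp only [vvec, htid]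

/-- General spec for `tIdx`. -/
lemma tIdx_spec (η : OmegaData) {j ρ : ℕ} (h00 : η.d 0 = 0) (hj1 : 1 ≤ j)
    (hjn : j ≤ ∑ i ∈ range (ρ+1), η.d i) :
    1 ≤ tIdx η j ∧ tIdx η j ≤ ρ ∧
    ∑ i ∈ range (tIdx η j), η.d i < j ∧ j ≤ ∑ i ∈ range (tIdx η j + 1), η.d i := by
  have hmem : ρ ∈ {t | j ≤ ∑ i ∈ range (t+1), η.d i} := hjn
  have hle : tIdx η j ≤ ρ := Nat.sInf_le hmem
  have hup : j ≤ ∑ i ∈ range (tIdx η j + 1), η.d i :=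
    Nat.sInf_mem (Set.nonempty_of_mem hmem)
  have h1 : 1 ≤ tIdx η j := by
    by_contra hc
    have h0 : tIdx η j = 0 := by omega
    rw [h0] at hup
    simp [h00] at hup
    omega
  have hlow : ∑ i ∈ range (tIdx η j), η.d i < j := by
    have hdef : sInf {t | j ≤ ∑ i ∈ range (t+1), η.d i} = tIdx η j := rfl
    have hnm : (tIdx η j - 1) ∉ {t | j ≤ ∑ i ∈ range (t+1), η.d i} :=
      Nat.notMem_of_lt_sInf (by omega)
    simp only [Set.mem_setOf_eq, not_le] at hnm
    have heq : tIdx η j - 1 + 1 = tIdx η j := by omega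
    rwa [heq] at hnm
  exact ⟨h1, hle, hlow, hup⟩

lemma psum_mono (d : ℕ → ℕ) (t : ℕ) {a b : ℕ} (hab : a ≤ b) :
    ∑ i ∈ range a, (if (Odd i ↔ Odd t) then d i else 0) ≤
    ∑ i ∈ range b, (if (Odd i ↔ Odd t) then d i else 0) := by
  apply Finset.sum_le_sum_of_subset
  exact Finset.range_subset_range.mpr hab

lemma psum_congr (d : ℕ → ℕ) (m : ℕ) {t t' : ℕ} (h : Odd t ↔ Odd t') :
    ∑ i ∈ range m, (if (Odd i ↔ Odd t) then d i else 0) =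
    ∑ i ∈ range m, (if (Odd i ↔ Odd t') then d i else 0) := by
  apply Finset.sum_congr rfl
  intro i _
  by_cases hi : Odd i ↔ Odd t
  · rw [if_pos hi, if_pos (hi.trans h)]
  · rw [if_neg hi, if_neg (fun hc => hi (hc.trans h.symm))]

variable (n k : ℕ) in
/-- The competitor `η'`: split the last block of `η_k` into `(d_r - 1, 1)`. -/
noncomputable def eta' : OmegaData :=
  ⟨rP n k + 1, zk n k,
    fun i => if i = rP n k then dk n k (rP n k) - 1
      else if i = rP n k + 1 then 1 else dk n k i⟩

section specifics
variable {n k : ℕ} (hn2 : 2 ≤ n) (hk1 : 1 ≤ k) (hkn : k ≤ n)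

lemma etak_d : (etak n k).d = dk n k := rfl
lemma etak_z : (etak n k).z = zk n k := rfl

include hn2 hk1 hkn

lemma dkr_ge2 : 2 ≤ dk n k (rP n k) :=
  (final_facts (by omega) hk1 hkn (by omega)).2.2

lemma Dsum_lt (t : ℕ) (h : t < rP n k) : ∑ i ∈ range (t+1), dk n k i < n := by
  obtain ⟨_, _, _, hmin⟩ := rP_spec n k (by omega) hk1 hkn
  rw [← S_oe]
  have := (inv_all (by omega : 1 ≤ n) hk1 hkn (n := n) (k := k) t).1
  have := hmin t h
  omega

lemma Dsum_r : ∑ i ∈ range (rP n k + 1), dk n k i = n := by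
  obtain ⟨_, _, hSr, _⟩ := rP_spec n k (by omega) hk1 hkn
  rw [← S_oe]
  exact hSr

lemma Dsum_rlow : ∑ i ∈ range (rP n k), dk n k i < n := by
  obtain ⟨hr1, _, _, _⟩ := rP_spec n k (by omega) hk1 hkn
  have h := Dsum_lt hn2 hk1 hkn (rP n k - 1) (by omega)
  have heq : rP n k - 1 + 1 = rP n k := by omega
  rwa [heq] at h

lemma tIdx_etak_n : tIdx (etak n k) n = rP n k :=
  tIdx_eq_of _ (by rw [etak_d]; exact Dsum_rlow hn2 hk1 hkn)
    (by rw [etak_d]; exact (Dsum_r hn2 hk1 hkn).ge)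

lemma eta'_d_eq (i : ℕ) (h : i < rP n k) : (eta' n k).d i = dk n k i := by
  show (if i = rP n k then _ else if i = rP n k + 1 then _ else _) = _
  rw [if_neg (by omega), if_neg (by omega)]

lemma eta'_Dsum_eq (t : ℕ) (h : t ≤ rP n k) :
    ∑ i ∈ range t, (eta' n k).d i = ∑ i ∈ range t, dk n k i := by
  apply Finset.sum_congr rfl
  intro i hi
  rw [Finset.mem_range] at hi
  exact eta'_d_eq hn2 hk1 hkn i (by omega)

lemma eta'_Dsum_r1 : ∑ i ∈ range (rP n k + 1), (eta' n k).d i = n - 1 := by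
  rw [Finset.sum_range_succ, eta'_Dsum_eq hn2 hk1 hkn _ le_rfl]
  have h1 : (eta' n k).d (rP n k) = dk n k (rP n k) - 1 := by
    show (if rP n k = rP n k then _ else _) = _
    rw [if_pos rfl]
  rw [h1]
  have h2 := Dsum_r hn2 hk1 hkn
  rw [Finset.sum_range_succ] at h2
  have := dkr_ge2 hn2 hk1 hkn
  omega

lemma eta'_Dsum_r2 : ∑ i ∈ range (rP n k + 2), (eta' n k).d i = n := by
  have h1 : rP n k + 2 = (rP n k + 1) + 1 := rfl
  rw [h1, Finset.sum_range_succ, eta'_Dsum_r1 hn2 hk1 hkn]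
  have h2 : (eta' n k).d (rP n k + 1) = 1 := by
    show (if rP n k + 1 = rP n k then _ else if rP n k + 1 = rP n k + 1 then _ else _) = _
    rw [if_neg (by omega), if_pos rfl]
  rw [h2]
  omega

lemma tIdx_eta'_n : tIdx (eta' n k) n = rP n k + 1 :=
  tIdx_eq_of _ (by rw [eta'_Dsum_r1 hn2 hk1 hkn]; omega)
    (by rw [eta'_Dsum_r2 hn2 hk1 hkn])

/-- spec for `tIdx (etak n k) j`, `1 ≤ j ≤ n`. -/
lemma tIdx_etak_spec (j : ℕ) (hj1 : 1 ≤ j) (hjn : j ≤ n) :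
    1 ≤ tIdx (etak n k) j ∧ tIdx (etak n k) j ≤ rP n k ∧
    ∑ i ∈ range (tIdx (etak n k) j), dk n k i < j ∧
    j ≤ ∑ i ∈ range (tIdx (etak n k) j + 1), dk n k i := by
  have := tIdx_spec (etak n k) (ρ := rP n k) (j := j) rfl hj1
    (by rw [etak_d, Dsum_r hn2 hk1 hkn]; exact hjn)
  rwa [etak_d] at this

lemma tIdx_eta'_eq (j : ℕ) (hj1 : 1 ≤ j) (hjn : j ≤ n - 1) :
    tIdx (eta' n k) j = tIdx (etak n k) j := by
  obtain ⟨ht1, htr, hlow, hup⟩ := tIdx_etak_spec hn2 hk1 hkn j hj1 (by omega)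
  set t := tIdx (etak n k) j with ht
  apply tIdx_eq_of
  · rw [eta'_Dsum_eq hn2 hk1 hkn t htr]; exact hlow
  · rcases Nat.lt_or_ge t (rP n k) with hlt | hge
    · rw [eta'_Dsum_eq hn2 hk1 hkn (t+1) (by omega)]; exact hup
    · have htr' : t = rP n k := by omega
      rw [htr', eta'_Dsum_r1 hn2 hk1 hkn]
      omega

lemma vvec_eta'_eq (j : ℕ) (hj1 : 1 ≤ j) (hjn : j ≤ n - 1) :
    vvec (eta' n k) j = vvec (etak n k) j := by
  obtain ⟨ht1, htr, hlow, hup⟩ := tIdx_etak_spec hn2 hk1 hkn j hj1 (by omega)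
  set t := tIdx (etak n k) j with ht
  rw [vvec_spec _ (tIdx_eta'_eq hn2 hk1 hkn j hj1 hjn), vvec_spec _ (rfl : tIdx (etak n k) j = t)]
  have hz : (eta' n k).z = (etak n k).z := rfl
  have hsum1 : ∑ i ∈ range t, (eta' n k).d i = ∑ i ∈ range t, (etak n k).d i := by
    rw [etak_d]; exact eta'_Dsum_eq hn2 hk1 hkn t htr
  have hsum2 : (∑ i ∈ range t, if (Odd i ↔ Odd t) then (eta' n k).d i else 0)
      = ∑ i ∈ range t, if (Odd i ↔ Odd t) then (etak n k).d i else 0 := by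
    apply Finset.sum_congr rfl
    intro i hi
    rw [Finset.mem_range] at hi
    rw [etak_d, eta'_d_eq hn2 hk1 hkn i (by omega)]
  rw [hz, hsum1, hsum2]

end specifics

lemma psum_ite_odd (d : ℕ → ℕ) (m t : ℕ) :
    (∑ i ∈ range m, if (Odd i ↔ Odd t) then d i else 0) =
    if Odd t then (∑ i ∈ range m, if Odd i then d i else 0)
    else (∑ i ∈ range m, if ¬ Odd i then d i else 0) := by
  by_cases ht : Odd t
  · rw [if_pos ht]
    apply Finset.sum_congr rfl
    intro i _
    by_cases hi : Odd i
    · rw [if_pos (by simp [hi, ht]), if_pos hi]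
    · rw [if_neg (by simp [hi, ht]), if_neg hi]
  · rw [if_neg ht]
    apply Finset.sum_congr rfl
    intro i _
    by_cases hi : Odd i
    · rw [if_neg (by simp [hi, ht]), if_neg (by simp [hi])]
    · rw [if_pos (by simp [hi, ht]), if_pos hi]

section specifics2
variable {n k : ℕ} (hn2 : 2 ≤ n) (hk1 : 1 ≤ k) (hkn : k ≤ n)

/-- value of `a` at `j = n` for `etak`. -/
noncomputable def AA (n k : ℕ) : ℕ := if Odd (rP n k) then qq n k else pp n k
/-- value of `a` at `j = n` for `eta'`. -/
noncomputable def BB (n k : ℕ) : ℕ := if Odd (rP n k) then pp n k else qq n k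

include hn2 hk1 hkn

lemma AA_psum :
    (∑ i ∈ range (rP n k + 1), if (Odd i ↔ Odd (rP n k)) then dk n k i else 0)
      = AA n k := by
  rw [psum_ite_odd, AA]
  obtain ⟨hf1, hf2, _⟩ := final_facts (by omega : 1 ≤ n) hk1 hkn (by omega)
  obtain ⟨ho1, ho2⟩ := oe_parity_sums (n := n) (k := k) (rP n k)
  by_cases hodd : Odd (rP n k)
  · rw [if_pos hodd, if_pos hodd, ← ho1]; exact (hf1 hodd).1
  · rw [if_neg hodd, if_neg hodd, ← ho2]; exact (hf2 hodd).2

lemma BB_psum :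
    (∑ i ∈ range (rP n k + 1), if (Odd i ↔ Odd (rP n k + 1)) then dk n k i else 0) + 1
      = BB n k := by
  rw [psum_ite_odd, BB]
  obtain ⟨hf1, hf2, _⟩ := final_facts (by omega : 1 ≤ n) hk1 hkn (by omega)
  obtain ⟨ho1, ho2⟩ := oe_parity_sums (n := n) (k := k) (rP n k)
  by_cases hodd : Odd (rP n k)
  · have hodd1 : ¬ Odd (rP n k + 1) := by simp [Nat.odd_add_one, hodd]
    rw [if_neg hodd1, if_pos hodd, ← ho2]
    have := (hf1 hodd).2
    omega
  · have hodd1 : Odd (rP n k + 1) := by simp [Nat.odd_add_one, hodd]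
    rw [if_pos hodd1, if_neg hodd, ← ho1]
    have := (hf2 hodd).1
    omega

lemma AA_pos : 1 ≤ AA n k ∧ AA n k ≤ n := by
  have h1 := pp_pos hk1 hkn
  have h2 := qq_pos hk1 hkn
  have h3 := qq_le_n hk1 hkn
  have h4 := pp_le_qq hk1 hkn
  unfold AA; split <;> omega

lemma BB_pos : 1 ≤ BB n k ∧ BB n k ≤ n := by
  have h1 := pp_pos hk1 hkn
  have h2 := qq_pos hk1 hkn
  have h3 := qq_le_n hk1 hkn
  have h4 := pp_le_qq hk1 hkn
  unfold BB; split <;> omega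

/-- Strict a-value bounds for intermediate indices. -/
lemma aval_bounds (j : ℕ) (hj1 : 1 ≤ j) (hjn : j ≤ n - 1) :
    1 ≤ (∑ i ∈ range (tIdx (etak n k) j), if (Odd i ↔ Odd (tIdx (etak n k) j))
          then dk n k i else 0) + (j - ∑ i ∈ range (tIdx (etak n k) j), dk n k i) ∧
    (((Odd (tIdx (etak n k) j) ↔ Odd (rP n k)) →
      (∑ i ∈ range (tIdx (etak n k) j), if (Odd i ↔ Odd (tIdx (etak n k) j))
          then dk n k i else 0) + (j - ∑ i ∈ range (tIdx (etak n k) j), dk n k i) < AA n k) ∧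
     (¬ (Odd (tIdx (etak n k) j) ↔ Odd (rP n k)) →
      (∑ i ∈ range (tIdx (etak n k) j), if (Odd i ↔ Odd (tIdx (etak n k) j))
          then dk n k i else 0) + (j - ∑ i ∈ range (tIdx (etak n k) j), dk n k i) < BB n k)) := by
  obtain ⟨ht1, htr, hlow, hup⟩ := tIdx_etak_spec hn2 hk1 hkn j hj1 (by omega)
  set t := tIdx (etak n k) j with ht
  set c := j - ∑ i ∈ range t, dk n k i with hc
  set pre := ∑ i ∈ range t, if (Odd i ↔ Odd t) then dk n k i else 0 with hpre
  have hDr := Dsum_r hn2 hk1 hkn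
  have hDrlow := Dsum_rlow hn2 hk1 hkn
  have hdkr : dk n k (rP n k) = n - ∑ i ∈ range (rP n k), dk n k i := by
    rw [Finset.sum_range_succ] at hDr
    omega
  have hdkr2 := dkr_ge2 hn2 hk1 hkn
  refine ⟨by omega, ?_, ?_⟩
  · intro hpar
    rcases Nat.lt_or_ge t (rP n k) with hlt | hge
    · -- t < rP, same parity
      have hstep : pre + c ≤ ∑ i ∈ range (t+1), if (Odd i ↔ Odd t) then dk n k i else 0 := by
        rw [Finset.sum_range_succ, if_pos Iff.rfl]
        have hcd : c ≤ dk n k t := by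
          rw [Finset.sum_range_succ] at hup
          omega
        omega
      have h2 : (∑ i ∈ range (t+1), if (Odd i ↔ Odd t) then dk n k i else 0)
          ≤ ∑ i ∈ range (rP n k), if (Odd i ↔ Odd t) then dk n k i else 0 :=
        psum_mono _ _ (by omega)
      have h3 : (∑ i ∈ range (rP n k), if (Odd i ↔ Odd t) then dk n k i else 0)
          = ∑ i ∈ range (rP n k), if (Odd i ↔ Odd (rP n k)) then dk n k i else 0 :=
        psum_congr _ _ hpar
      have h4 : (∑ i ∈ range (rP n k), if (Odd i ↔ Odd (rP n k)) then dk n k i else 0)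
          + dk n k (rP n k)
          = ∑ i ∈ range (rP n k + 1), if (Odd i ↔ Odd (rP n k)) then dk n k i else 0 := by
        rw [Finset.sum_range_succ, if_pos Iff.rfl]
      have h5 := AA_psum hn2 hk1 hkn
      omega
    · -- t = rP
      have hteq : t = rP n k := by omega
      have hcc : c < dk n k (rP n k) := by
        rw [hc, hteq]
        omega
      have h4 : pre + dk n k (rP n k)
          = ∑ i ∈ range (rP n k + 1), if (Odd i ↔ Odd (rP n k)) then dk n k i else 0 := by
        rw [Finset.sum_range_succ, if_pos Iff.rfl, hpre, hteq]
      have h5 := AA_psum hn2 hk1 hkn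
      omega
  · intro hpar
    have hlt : t < rP n k := by
      rcases Nat.lt_or_ge t (rP n k) with h | h
      · exact h
      · exact absurd (by rw [show t = rP n k by omega]) hpar
    have hstep : pre + c ≤ ∑ i ∈ range (t+1), if (Odd i ↔ Odd t) then dk n k i else 0 := by
      rw [Finset.sum_range_succ, if_pos Iff.rfl]
      have hcd : c ≤ dk n k t := by
        rw [Finset.sum_range_succ] at hup
        omega
      omega
    have hpar2 : Odd t ↔ Odd (rP n k + 1) := by
      rw [Nat.odd_add_one]
      tauto
    have h2 : (∑ i ∈ range (t+1), if (Odd i ↔ Odd t) then dk n k i else 0)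
        ≤ ∑ i ∈ range (rP n k + 1), if (Odd i ↔ Odd t) then dk n k i else 0 :=
      psum_mono _ _ (by omega)
    have h3 : (∑ i ∈ range (rP n k + 1), if (Odd i ↔ Odd t) then dk n k i else 0)
        = ∑ i ∈ range (rP n k + 1), if (Odd i ↔ Odd (rP n k + 1)) then dk n k i else 0 :=
      psum_congr _ _ hpar2
    have h5 := BB_psum hn2 hk1 hkn
    omega

end specifics2

/-- The common point set. -/
noncomputable def Cset (n k : ℕ) : Finset (ℕ × ℕ) :=
  Tj n (etak n k) 0 ∪ (Finset.Icc 1 (n-1)).biUnion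
    (fun i => (Tj n (etak n k) i).image
      (fun v => v + (rshift n (etak n k) i, rshift n (etak n k) i)))

/-- The extra point. -/
noncomputable def Pt (n : ℕ) (η : OmegaData) : ℕ × ℕ :=
  vvec η n + (rshift n η n, rshift n η n)

lemma Tj_n_singleton {n : ℕ} (hn : 1 ≤ n) (η : OmegaData) :
    Tj n η n = {vvec η n} := by
  rw [Tj, if_neg (by omega)]
  have h1 : n - n + 1 = 1 := by omega
  rw [h1]
  simp

lemma Tset'_split {n : ℕ} (hn : 1 ≤ n) (η : OmegaData) :
    Tset' n η =
      (Tj n η 0 ∪ (Finset.Icc 1 (n-1)).biUnion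
        (fun i => (Tj n η i).image (fun v => v + (rshift n η i, rshift n η i))))
      ∪ {Pt n η} := by
  rw [Tset']
  have hIcc : Finset.Icc 1 n = insert n (Finset.Icc 1 (n-1)) := by
    ext a
    simp only [Finset.mem_Icc, Finset.mem_insert]
    omega
  rw [hIcc, Finset.biUnion_insert, Tj_n_singleton hn]
  have himg : ({vvec η n} : Finset (ℕ × ℕ)).image
      (fun v => v + (rshift n η n, rshift n η n)) = {Pt n η} := by
    rw [Finset.image_singleton, Pt]
  rw [himg]
  ext v
  simp only [Finset.mem_union, Finset.mem_singleton]
  tauto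

section specifics3
variable {n k : ℕ} (hn2 : 2 ≤ n) (hk1 : 1 ≤ k) (hkn : k ≤ n)

include hn2 hk1 hkn

lemma Tset'_etak_split :
    Tset' n (etak n k) = Cset n k ∪ {Pt n (etak n k)} :=
  Tset'_split (by omega) _

lemma Tset'_eta'_split :
    Tset' n (eta' n k) = Cset n k ∪ {Pt n (eta' n k)} := by
  rw [Tset'_split (by omega : 1 ≤ n)]
  have hC : (Tj n (eta' n k) 0 ∪ (Finset.Icc 1 (n-1)).biUnion
      (fun i => (Tj n (eta' n k) i).image
        (fun v => v + (rshift n (eta' n k) i, rshift n (eta' n k) i)))) = Cset n k := by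
    rw [Cset]
    have h0 : Tj n (eta' n k) 0 = Tj n (etak n k) 0 := rfl
    rw [h0]
    congr 1
    apply Finset.biUnion_congr rfl
    intro i hi
    rw [Finset.mem_Icc] at hi
    have hv := vvec_eta'_eq hn2 hk1 hkn i hi.1 hi.2
    have hTT : Tj n (eta' n k) i = Tj n (etak n k) i := by
      simp only [Tj, if_neg (show ¬ (i = 0) by omega), hv]
    rw [hTT, rshift, rshift, hv]
  rw [hC]

lemma vvec_etak_n :
    vvec (etak n k) n = if (zk n k = true) ↔ Odd (rP n k)
      then (AA n k, 0) else (0, AA n k) := by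
  rw [vvec_spec _ (tIdx_etak_n hn2 hk1 hkn), etak_z, etak_d]
  have hDr := Dsum_r hn2 hk1 hkn
  rw [Finset.sum_range_succ] at hDr
  have hAA := AA_psum hn2 hk1 hkn
  rw [Finset.sum_range_succ, if_pos Iff.rfl] at hAA
  have ha : (∑ i ∈ range (rP n k), if (Odd i ↔ Odd (rP n k)) then dk n k i else 0) +
      (n - ∑ i ∈ range (rP n k), dk n k i) = AA n k := by omega
  rw [ha]

lemma vvec_eta'_n :
    vvec (eta' n k) n = if (zk n k = true) ↔ Odd (rP n k + 1)
      then (BB n k, 0) else (0, BB n k) := by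
  rw [vvec_spec _ (tIdx_eta'_n hn2 hk1 hkn)]
  have hz : (eta' n k).z = zk n k := rfl
  have hD := eta'_Dsum_r1 hn2 hk1 hkn
  have hBB := BB_psum hn2 hk1 hkn
  have hsum : (∑ i ∈ range (rP n k + 1), if (Odd i ↔ Odd (rP n k + 1)) then (eta' n k).d i else 0)
      = ∑ i ∈ range (rP n k + 1), if (Odd i ↔ Odd (rP n k + 1)) then dk n k i else 0 := by
    apply Finset.sum_congr rfl
    intro i hi
    rw [Finset.mem_range] at hi
    rcases Nat.lt_or_ge i (rP n k) with h | h
    · rw [eta'_d_eq hn2 hk1 hkn i h]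
    · have hieq : i = rP n k := by omega
      have hpar : ¬ (Odd i ↔ Odd (rP n k + 1)) := by
        rw [hieq, Nat.odd_add_one]
        tauto
      rw [if_neg hpar, if_neg hpar]
  have ha : (∑ i ∈ range (rP n k + 1), if (Odd i ↔ Odd (rP n k + 1)) then (eta' n k).d i else 0) +
      (n - ∑ i ∈ range (rP n k + 1), (eta' n k).d i) = BB n k := by
    rw [hsum, hD]
    omega
  rw [hz, ha]

lemma Pt_etak_eq :
    Pt n (etak n k) = if (zk n k = true) ↔ Odd (rP n k)
      then (AA n k, 0) else (n * AA n k, AA n k + n * AA n k) := by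
  rw [Pt, rshift, vvec_etak_n hn2 hk1 hkn]
  by_cases h : (zk n k = true) ↔ Odd (rP n k)
  · rw [if_pos h, if_pos h]
    simp [Prod.ext_iff]
  · rw [if_neg h, if_neg h]
    simp [Prod.ext_iff]

lemma Pt_eta'_eq :
    Pt n (eta' n k) = if (zk n k = true) ↔ Odd (rP n k + 1)
      then (BB n k, 0) else (n * BB n k, BB n k + n * BB n k) := by
  rw [Pt, rshift, vvec_eta'_n hn2 hk1 hkn]
  by_cases h : (zk n k = true) ↔ Odd (rP n k + 1)
  · rw [if_pos h, if_pos h]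
    simp [Prod.ext_iff]
  · rw [if_neg h, if_neg h]
    simp [Prod.ext_iff]

end specifics3

section specifics4
variable {n k : ℕ} (hn2 : 2 ≤ n) (hk1 : 1 ≤ k) (hkn : k ≤ n)

include hn2 hk1 hkn

lemma mem_Cset_elim {v : ℕ × ℕ} (hv : v ∈ Cset n k) :
    (∃ q, q < n ∧ v = (q+1, q+1)) ∨
    (∃ j, 1 ≤ j ∧ j ≤ n - 1 ∧ ∃ p, p ≤ n - j ∧
      v = vvec (etak n k) j +
        (p + n * (vvec (etak n k) j).2, p + n * (vvec (etak n k) j).2)) := by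
  rw [Cset, Finset.mem_union] at hv
  rcases hv with hv | hv
  · left
    rw [Tj, if_pos rfl] at hv
    simp only [Finset.mem_image, Finset.mem_range] at hv
    obtain ⟨q, hq, hqe⟩ := hv
    exact ⟨q, hq, hqe.symm⟩
  · right
    simp only [Finset.mem_biUnion, Finset.mem_Icc, Finset.mem_image] at hv
    obtain ⟨j, ⟨hj1, hjn⟩, w, hw, hwe⟩ := hv
    rw [Tj, if_neg (by omega)] at hw
    simp only [Finset.mem_image, Finset.mem_range] at hw
    obtain ⟨p, hp, hpe⟩ := hw
    refine ⟨j, hj1, hjn, p, by omega, ?_⟩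
    rw [← hwe, ← hpe, rshift]
    simp only [Prod.ext_iff, Prod.fst_add, Prod.snd_add]
    constructor <;> omega

lemma xpoint_not_mem (A : ℕ) (hA1 : 1 ≤ A)
    (hb : ∀ j, 1 ≤ j → j ≤ n-1 → ((zk n k = true) ↔ Odd (tIdx (etak n k) j)) →
      (∑ i ∈ range (tIdx (etak n k) j),
          if (Odd i ↔ Odd (tIdx (etak n k) j)) then dk n k i else 0)
        + (j - ∑ i ∈ range (tIdx (etak n k) j), dk n k i) < A) :
    (A, 0) ∉ Cset n k := by
  intro hmem
  rcases mem_Cset_elim hn2 hk1 hkn hmem with ⟨q, hq, he⟩ | ⟨j, hj1, hjn, p, hp, he⟩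
  · have := congrArg Prod.snd he
    simp at this
  · have hge1 := (aval_bounds hn2 hk1 hkn j hj1 hjn).1
    have hw : vvec (etak n k) j = _ := vvec_spec (etak n k) (rfl : tIdx (etak n k) j = _)
    rw [etak_z, etak_d] at hw
    by_cases hcond : (zk n k = true) ↔ Odd (tIdx (etak n k) j)
    · rw [if_pos hcond] at hw
      rw [hw] at he
      have h1 := congrArg Prod.fst he
      have h2 := congrArg Prod.snd he
      simp only [Prod.fst_add, Prod.snd_add] at h1 h2
      have hba := hb j hj1 hjn hcond
      try simp at h1
      try simp at h2
      omega
    · rw [if_neg hcond] at hw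
      rw [hw] at he
      have h2 := congrArg Prod.snd he
      simp only [Prod.snd_add] at h2
      try simp at h2
      omega

lemma ypoint_not_mem (A : ℕ) (hA1 : 1 ≤ A)
    (hb : ∀ j, 1 ≤ j → j ≤ n-1 → (¬ ((zk n k = true) ↔ Odd (tIdx (etak n k) j))) →
      (∑ i ∈ range (tIdx (etak n k) j),
          if (Odd i ↔ Odd (tIdx (etak n k) j)) then dk n k i else 0)
        + (j - ∑ i ∈ range (tIdx (etak n k) j), dk n k i) < A) :
    (n * A, A + n * A) ∉ Cset n k := by
  intro hmem
  have hnA : n ≤ n * A := Nat.le_mul_of_pos_right n hA1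
  rcases mem_Cset_elim hn2 hk1 hkn hmem with ⟨q, hq, he⟩ | ⟨j, hj1, hjn, p, hp, he⟩
  · have h1 := congrArg Prod.fst he
    have h2 := congrArg Prod.snd he
    try simp at h1
    try simp at h2
    omega
  · have hge1 := (aval_bounds hn2 hk1 hkn j hj1 hjn).1
    have hw : vvec (etak n k) j = _ := vvec_spec (etak n k) (rfl : tIdx (etak n k) j = _)
    rw [etak_z, etak_d] at hw
    by_cases hcond : (zk n k = true) ↔ Odd (tIdx (etak n k) j)
    · rw [if_pos hcond] at hw
      rw [hw] at he
      have h2 := congrArg Prod.snd he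
      simp only [Prod.snd_add] at h2
      try simp at h2
      omega
    · rw [if_neg hcond] at hw
      rw [hw] at he
      have h1 := congrArg Prod.fst he
      have h2 := congrArg Prod.snd he
      simp only [Prod.fst_add, Prod.snd_add] at h1 h2
      try simp at h1
      try simp at h2
      have hba := hb j hj1 hjn hcond
      omega

lemma Pt_etak_not_mem : Pt n (etak n k) ∉ Cset n k := by
  rw [Pt_etak_eq hn2 hk1 hkn]
  by_cases hcond : (zk n k = true) ↔ Odd (rP n k)
  · rw [if_pos hcond]
    apply xpoint_not_mem hn2 hk1 hkn _ (AA_pos hn2 hk1 hkn).1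
    intro j hj1 hjn hx
    exact (aval_bounds hn2 hk1 hkn j hj1 hjn).2.1 (by tauto)
  · rw [if_neg hcond]
    apply ypoint_not_mem hn2 hk1 hkn _ (AA_pos hn2 hk1 hkn).1
    intro j hj1 hjn hx
    refine (aval_bounds hn2 hk1 hkn j hj1 hjn).2.1 ?_
    by_cases hzz : zk n k = true <;> tauto

lemma Pt_eta'_not_mem : Pt n (eta' n k) ∉ Cset n k := by
  rw [Pt_eta'_eq hn2 hk1 hkn]
  have hpar : Odd (rP n k + 1) ↔ ¬ Odd (rP n k) := Nat.odd_add_one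
  by_cases hcond : (zk n k = true) ↔ Odd (rP n k + 1)
  · rw [if_pos hcond]
    apply xpoint_not_mem hn2 hk1 hkn _ (BB_pos hn2 hk1 hkn).1
    intro j hj1 hjn hx
    refine (aval_bounds hn2 hk1 hkn j hj1 hjn).2.2 ?_
    by_cases hzz : zk n k = true <;> by_cases hrr : Odd (rP n k) <;> tauto
  · rw [if_neg hcond]
    apply ypoint_not_mem hn2 hk1 hkn _ (BB_pos hn2 hk1 hkn).1
    intro j hj1 hjn hx
    refine (aval_bounds hn2 hk1 hkn j hj1 hjn).2.2 ?_
    by_cases hzz : zk n k = true <;> by_cases hrr : Odd (rP n k) <;> tauto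

end specifics4

section sums
variable {n k : ℕ} (hn2 : 2 ≤ n) (hk1 : 1 ≤ k) (hkn : k ≤ n)

lemma Lam3_mem (β : ℕ × ℕ × ℕ) :
    β ∈ Lam3 n ↔ β.1 ≤ n ∧ β.2.1 ≤ n ∧ β.2.2 ≤ n ∧
      1 ≤ β.1 + β.2.1 + β.2.2 ∧ β.1 + β.2.1 + β.2.2 ≤ n := by
  simp only [Lam3, Finset.mem_filter, Finset.mem_product, Finset.mem_range,
    Nat.lt_succ_iff]
  tauto

lemma preimage_x (A : ℕ) (hA1 : 1 ≤ A) (hAn : A ≤ n) :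
    ((A, 0, 0) ∈ Lam3 n) ∧ Amap n (A, 0, 0) = (A, 0) ∧
    (∀ β ∈ Lam3 n, Amap n β = (A, 0) → β = (A, 0, 0)) := by
  refine ⟨(Lam3_mem _).mpr (by simp; omega), by simp [Amap], ?_⟩
  intro β hβ hA
  rw [Lam3_mem] at hβ
  obtain ⟨b1, b2, b3⟩ := β
  simp only [Amap, Prod.mk.injEq] at hA
  obtain ⟨hA1', hA2⟩ := hA
  simp only at hβ hA1' hA2
  have h3 : b3 ≤ (n+1) * b3 := Nat.le_mul_of_pos_left _ (by omega)
  have hb3 : b3 = 0 := by omega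
  have hb2 : b2 = 0 := by omega
  have hnb3 : n * b3 = 0 := by rw [hb3]; simp
  simp only [Prod.mk.injEq]
  omega

lemma preimage_y (A : ℕ) (hA1 : 1 ≤ A) (hAn : A ≤ n) :
    ((0, 0, A) ∈ Lam3 n) ∧ Amap n (0, 0, A) = (n * A, A + n * A) ∧
    (∀ β ∈ Lam3 n, Amap n β = (n * A, A + n * A) → β = (0, 0, A)) := by
  refine ⟨(Lam3_mem _).mpr (by simp; omega), by simp [Amap]; ring, ?_⟩
  intro β hβ hA
  rw [Lam3_mem] at hβ
  obtain ⟨b1, b2, b3⟩ := β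
  simp only [Amap, Prod.mk.injEq] at hA
  obtain ⟨hA1', hA2⟩ := hA
  simp only at hβ hA1' hA2
  have hx : (n+1) * A = A + n * A := by ring
  have h1 : b3 ≤ A := by
    by_contra hc
    push_neg at hc
    have h2 : (n+1) * (A+1) ≤ (n+1) * b3 := Nat.mul_le_mul_left _ (by omega)
    have h3 : (n+1) * (A+1) = n * A + A + n + 1 := by ring
    omega
  have h2 : (n+1) * b3 + (n+1) * (A - b3) = (n+1) * A := by
    rw [← Nat.mul_add]
    congr 1
    omega
  have hb2 : b2 = (n+1) * (A - b3) := by omega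
  have hb3 : b3 = A := by
    by_contra hc
    have h4 : (n+1) * 1 ≤ (n+1) * (A - b3) := Nat.mul_le_mul_left _ (by omega)
    omega
  have hnb3 : n * b3 = n * A := by rw [hb3]
  simp only [Prod.mk.injEq]
  omega

lemma mJ_split (η : OmegaData) (P : ℕ × ℕ) (βP : ℕ × ℕ × ℕ)
    (hT : Tset' n η = Cset n k ∪ {P}) (hP : P ∉ Cset n k)
    (hmem : βP ∈ Lam3 n) (hA : Amap n βP = P)
    (huniq : ∀ β ∈ Lam3 n, Amap n β = P → β = βP) :
    mJ n (Jset n η) =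
      mJ n ((Lam3 n).filter (fun β => Amap n β ∈ Cset n k)) + P := by
  classical
  have hJ : Jset n η = (Lam3 n).filter (fun β => Amap n β ∈ Cset n k) ∪ {βP} := by
    ext β
    simp only [Jset, Finset.mem_filter, hT, Finset.mem_union, Finset.mem_singleton]
    constructor
    · rintro ⟨hL, hc | hp⟩
      · exact Or.inl ⟨hL, hc⟩
      · exact Or.inr (huniq β hL hp)
    · rintro (⟨hL, hc⟩ | rfl)
      · exact ⟨hL, Or.inl hc⟩
      · exact ⟨hmem, Or.inr hA⟩
  have hdisj : Disjoint ((Lam3 n).filter (fun β => Amap n β ∈ Cset n k)) {βP} := by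
    rw [Finset.disjoint_singleton_right, Finset.mem_filter]
    rintro ⟨_, hc⟩
    rw [hA] at hc
    exact hP hc
  rw [mJ, hJ, Finset.sum_union hdisj, Finset.sum_singleton, hA]
  rfl

lemma fk_add (u v : ℕ × ℕ) : fk k (u + v) = fk k u + fk k v := by
  unfold fk
  simp only [Prod.fst_add, Prod.snd_add]
  push_cast
  ring

lemma fk_x (A : ℕ) : fk k (A, 0) = (k : ℤ) * A := by
  unfold fk; push_cast; ring

lemma fk_y (A : ℕ) : fk k ((n * A, A + n * A) : ℕ × ℕ) = ((n : ℤ) + 1 - k) * A := by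
  unfold fk; push_cast; ring

include hn2 hk1 hkn

lemma AA_cast_x (hcond : (zk n k = true) ↔ Odd (rP n k)) :
    (AA n k : ℤ) = (n : ℤ) + 1 - k := by
  unfold AA qq pp
  by_cases hzz : zk n k = true
  · have hodd : Odd (rP n k) := hcond.mp hzz
    rw [if_pos hodd, if_pos hzz]
    push_cast [Nat.cast_sub (by omega : k ≤ n + 1)]
    ring
  · have hodd : ¬ Odd (rP n k) := fun h => hzz (hcond.mpr h)
    rw [if_neg hodd, if_neg hzz]
    push_cast [Nat.cast_sub (by omega : k ≤ n + 1)]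
    ring

lemma AA_cast_y (hcond : ¬ ((zk n k = true) ↔ Odd (rP n k))) :
    (AA n k : ℤ) = (k : ℤ) := by
  unfold AA qq pp
  by_cases hzz : zk n k = true
  · have hodd : ¬ Odd (rP n k) := fun h => hcond ⟨fun _ => h, fun _ => hzz⟩
    rw [if_neg hodd, if_pos hzz]
  · have hodd : Odd (rP n k) := by
      by_contra h
      exact hcond ⟨fun hz => absurd hz hzz, fun ho => absurd ho h⟩
    rw [if_pos hodd, if_neg hzz]

end sums

section final
variable {n k : ℕ} (hn2 : 2 ≤ n) (hk1 : 1 ≤ k) (hkn : k ≤ n)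

include hn2 hk1 hkn

lemma BB_cast_x (hcond : (zk n k = true) ↔ Odd (rP n k + 1)) :
    (BB n k : ℤ) = (n : ℤ) + 1 - k := by
  have hpar : Odd (rP n k + 1) ↔ ¬ Odd (rP n k) := Nat.odd_add_one
  unfold BB qq pp
  by_cases hzz : zk n k = true
  · have hodd : ¬ Odd (rP n k) := hpar.mp (hcond.mp hzz)
    rw [if_neg hodd, if_pos hzz]
    push_cast [Nat.cast_sub (by omega : k ≤ n + 1)]
    ring
  · have hodd : Odd (rP n k) := by
      by_contra h
      exact hzz (hcond.mpr (hpar.mpr h))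
    rw [if_pos hodd, if_neg hzz]
    push_cast [Nat.cast_sub (by omega : k ≤ n + 1)]
    ring

lemma BB_cast_y (hcond : ¬ ((zk n k = true) ↔ Odd (rP n k + 1))) :
    (BB n k : ℤ) = (k : ℤ) := by
  have hpar : Odd (rP n k + 1) ↔ ¬ Odd (rP n k) := Nat.odd_add_one
  unfold BB qq pp
  by_cases hzz : zk n k = true
  · have hodd : Odd (rP n k) := by
      by_contra h
      exact hcond ⟨fun _ => hpar.mpr h, fun _ => hzz⟩
    rw [if_pos hodd, if_pos hzz]
  · have hodd : ¬ Odd (rP n k) := by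
      intro h
      exact hcond ⟨fun hz => absurd hz hzz, fun ho => absurd (hpar.mp ho) (by simp [h])⟩
    rw [if_neg hodd, if_neg hzz]

lemma G_etak : fk k (mJ n (Jset n (etak n k))) =
    fk k (mJ n ((Lam3 n).filter (fun β => Amap n β ∈ Cset n k))) +
      (k : ℤ) * ((n : ℤ) + 1 - k) := by
  have hnm := Pt_etak_not_mem hn2 hk1 hkn
  have hsp := Tset'_etak_split hn2 hk1 hkn
  have hPt := Pt_etak_eq hn2 hk1 hkn
  obtain ⟨hApos, hAle⟩ := AA_pos hn2 hk1 hkn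
  by_cases hcond : (zk n k = true) ↔ Odd (rP n k)
  · rw [if_pos hcond] at hPt
    obtain ⟨hm, hA, hu⟩ := preimage_x (n := n) (AA n k) hApos hAle
    rw [mJ_split (etak n k) (AA n k, 0) _ (by rw [hsp, hPt]) (hPt ▸ hnm) hm hA hu,
      fk_add, fk_x, AA_cast_x hn2 hk1 hkn hcond]
  · rw [if_neg hcond] at hPt
    obtain ⟨hm, hA, hu⟩ := preimage_y (n := n) (AA n k) hApos hAle
    rw [mJ_split (etak n k) _ _ (by rw [hsp, hPt]) (hPt ▸ hnm) hm hA hu,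
      fk_add, fk_y, AA_cast_y hn2 hk1 hkn hcond]
    ring

lemma G_eta' : fk k (mJ n (Jset n (eta' n k))) =
    fk k (mJ n ((Lam3 n).filter (fun β => Amap n β ∈ Cset n k))) +
      (k : ℤ) * ((n : ℤ) + 1 - k) := by
  have hnm := Pt_eta'_not_mem hn2 hk1 hkn
  have hsp := Tset'_eta'_split hn2 hk1 hkn
  have hPt := Pt_eta'_eq hn2 hk1 hkn
  obtain ⟨hBpos, hBle⟩ := BB_pos hn2 hk1 hkn
  by_cases hcond : (zk n k = true) ↔ Odd (rP n k + 1)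
  · rw [if_pos hcond] at hPt
    obtain ⟨hm, hA, hu⟩ := preimage_x (n := n) (BB n k) hBpos hBle
    rw [mJ_split (eta' n k) (BB n k, 0) _ (by rw [hsp, hPt]) (hPt ▸ hnm) hm hA hu,
      fk_add, fk_x, BB_cast_x hn2 hk1 hkn hcond]
  · rw [if_neg hcond] at hPt
    obtain ⟨hm, hA, hu⟩ := preimage_y (n := n) (BB n k) hBpos hBle
    rw [mJ_split (eta' n k) _ _ (by rw [hsp, hPt]) (hPt ▸ hnm) hm hA hu,
      fk_add, fk_y, BB_cast_y hn2 hk1 hkn hcond]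
    ring

lemma eta'_isOmega : (eta' n k).IsOmega n := by
  obtain ⟨hr1, hrn, _, _⟩ := rP_spec n k (by omega) hk1 hkn
  have hd2 := dkr_ge2 hn2 hk1 hkn
  refine ⟨?_, ?_, ?_, ?_⟩
  · show (if 0 = rP n k then _ else if 0 = rP n k + 1 then _ else dk n k 0) = 0
    rw [if_neg (by omega), if_neg (by omega)]
    rfl
  · intro i hi1 hir
    have hir' : i ≤ rP n k + 1 := hir
    show 1 ≤ (if i = rP n k then dk n k (rP n k) - 1
      else if i = rP n k + 1 then 1 else dk n k i)
    by_cases h1 : i = rP n k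
    · rw [if_pos h1]; omega
    · rw [if_neg h1]
      by_cases h2 : i = rP n k + 1
      · rw [if_pos h2]
      · rw [if_neg h2]
        exact dk_pos_le (by omega) hk1 hkn i hi1 (by omega)
  · intro i hi
    have hi' : rP n k + 1 < i := hi
    show (if i = rP n k then _ else if i = rP n k + 1 then _ else dk n k i) = 0
    rw [if_neg (by omega), if_neg (by omega)]
    exact dk_eq_zero_gt (by omega) hk1 hkn i (by omega)
  · show ∑ i ∈ range (rP n k + 1 + 1), (eta' n k).d i = n
    exact eta'_Dsum_r2 hn2 hk1 hkn

lemma eta'_ne : eta' n k ≠ etak n k := by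
  intro h
  have h1 : (eta' n k).d (rP n k + 1) = 1 := by
    show (if rP n k + 1 = rP n k then _ else if rP n k + 1 = rP n k + 1 then _ else _) = 1
    rw [if_neg (by omega), if_pos rfl]
  have h2 : (etak n k).d (rP n k + 1) = 0 := by
    rw [etak_d]
    exact dk_eq_zero_gt (by omega) hk1 hkn _ (by omega)
  rw [h] at h1
  omega

end final
end S6

open S6 in
theorem stmt6_aux (n : ℕ) (hn : 1 ≤ n) (k : ℕ) (hk1 : 1 ≤ k) (hkn : k ≤ n) :
    ∃ η : OmegaData, η.IsOmega n ∧ η ≠ etak n k ∧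
      fk k (mJ n (Jset n η)) = fk k (mJ n (Jset n (etak n k))) := by
  rcases Nat.lt_or_ge n 2 with hn1 | hn2
  · -- n = 1, k = 1
    have hn1' : n = 1 := by omega
    subst hn1'
    have hk : k = 1 := by omega
    subst hk
    obtain ⟨hr1, hrn, hSr, _⟩ := rP_spec 1 1 le_rfl le_rfl le_rfl
    have hrP : rP 1 1 = 1 := by omega
    rw [hrP] at hSr
    have hD : ∑ i ∈ range 2, dk 1 1 i = 1 := by rw [← S_oe]; exact hSr
    have hdk0 : dk 1 1 0 = 0 := rfl
    have hD1 : ∑ i ∈ range 1, dk 1 1 i = 0 := by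
      rw [Finset.sum_range_one]; exact hdk0
    have hdk1 : dk 1 1 1 = 1 := by
      have h2 : ∑ i ∈ range 2, dk 1 1 i = ∑ i ∈ range 1, dk 1 1 i + dk 1 1 1 :=
        Finset.sum_range_succ _ 1
      omega
    set η : OmegaData := ⟨1, false, dk 1 1⟩ with hη
    have hηd : η.d = dk 1 1 := rfl
    have hηz : η.z = false := rfl
    refine ⟨η, ⟨hdk0, ?_, ?_, ?_⟩, ?_, ?_⟩
    · intro i h1 h2
      have h2' : i ≤ 1 := h2
      have hieq : i = 1 := by omega
      show 1 ≤ dk 1 1 i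
      rw [hieq, hdk1]
    · intro i hi
      have hi' : 1 < i := hi
      show dk 1 1 i = 0
      exact dk_eq_zero_gt le_rfl le_rfl le_rfl i (by omega)
    · show ∑ i ∈ range 2, dk 1 1 i = 1
      exact hD
    · intro h
      have hcz := congrArg OmegaData.z h
      rw [hηz] at hcz
      have : (etak 1 1).z = true := by rw [etak_z]; decide
      rw [this] at hcz
      exact Bool.false_ne_true hcz
    · -- the value equality
      have ht1 : tIdx η 1 = 1 := tIdx_eq_of η (by rw [hηd, hD1]; omega) (by rw [hηd]; exact hD.ge)
      have ht2 : tIdx (etak 1 1) 1 = 1 :=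
        tIdx_eq_of _ (by rw [etak_d, hD1]; omega) (by rw [etak_d]; exact hD.ge)
      have hv1 : vvec η 1 = (0, 1) := by
        rw [vvec_spec η ht1, hηd, hηz, hD1]
        rw [if_neg (by simp [Nat.odd_iff])]
        rw [Finset.sum_range_one, if_neg (by simp [Nat.odd_iff])]
      have hv2 : vvec (etak 1 1) 1 = (1, 0) := by
        rw [vvec_spec _ ht2, etak_d, etak_z, hD1]
        rw [if_pos (by rw [show zk 1 1 = true from by decide]; simp [Nat.odd_iff])]
        rw [Finset.sum_range_one, if_neg (by simp [Nat.odd_iff])]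
      have hIcc : Finset.Icc 1 (1-1) = (∅ : Finset ℕ) := by decide
      have hT1 : Tset' 1 η = {(1,1),(1,2)} := by
        rw [Tset'_split le_rfl, hIcc, Finset.biUnion_empty, Finset.union_empty,
          Pt, rshift, hv1]
        rw [show Tj 1 η 0 = {(1,1)} from by rw [Tj, if_pos rfl]; decide]
        decide
      have hT2 : Tset' 1 (etak 1 1) = {(1,1),(1,0)} := by
        rw [Tset'_split le_rfl, hIcc, Finset.biUnion_empty, Finset.union_empty,
          Pt, rshift, hv2]
        rw [show Tj 1 (etak 1 1) 0 = {(1,1)} from by rw [Tj, if_pos rfl]; decide]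
        decide
      have hJ1 : Jset 1 η = {(0,1,0),(0,0,1)} := by
        ext β
        obtain ⟨b1, b2, b3⟩ := β
        simp only [Jset, Finset.mem_filter, Lam3_mem, hT1, Finset.mem_insert,
          Finset.mem_singleton, Amap, Prod.mk.injEq]
        omega
      have hJ2 : Jset 1 (etak 1 1) = {(1,0,0),(0,1,0)} := by
        ext β
        obtain ⟨b1, b2, b3⟩ := β
        simp only [Jset, Finset.mem_filter, Lam3_mem, hT2, Finset.mem_insert,
          Finset.mem_singleton, Amap, Prod.mk.injEq]
        omega
      rw [hJ1, hJ2]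
      decide
  · exact ⟨eta' n k, eta'_isOmega hn2 hk1 hkn, eta'_ne hn2 hk1 hkn,
      by rw [G_eta' hn2 hk1 hkn, G_etak hn2 hk1 hkn]⟩

theorem stmt6 (n : ℕ) (hn : 1 ≤ n) (k : ℕ) (hk1 : 1 ≤ k) (hkn : k ≤ n) :
    ∃ η : OmegaData, η.IsOmega n ∧ η ≠ etak n k ∧
      fk k (mJ n (Jset n η)) = fk k (mJ n (Jset n (etak n k))) :=
  stmt6_aux n hn k hk1 hkn
end
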